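/- arXiv:math/0607463 — 3 statements merged into one kernel-verified Lean document; each statement's English description precedes it below -/
import Mathlib

section
/- Let K ⊂ ℝⁿ be a compact basic semi-algebraic set K = {x ∈ ℝⁿ : g_j(x) ≥ 0, j = 1,…,m} for real polynomials g_1,…,g_m, let μ be a finite Borel measure on K with moment sequence z = (z_α)_{α∈ℕⁿ}, and let y = (y_α)_{α∈ℕⁿ} be a real sequence. Then y has a representing Borel measure ν on K that is uniformly absolutely continuous with respect to μ (i.e., dν = h dμ for some 0 ≤ h ∈ L_∞(K,μ)) if and only if there exists a scalar κ such that for every subset J ⊆ {1,…,m} and every polynomial f ∈ ℝ[X]: 0 ≤ L_y(f² g_J) ≤ κ L_z(f² g_J), where g_J := ∏_{j∈J} g_j (with g_∅ ≡ 1). -/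
open MeasureTheory MvPolynomial
open scoped NNReal ENNReal RealInnerProductSpace

/-- The Riesz functional `L_y` of a sequence `y = (y_α)`:
`f = Σ_α f_α X^α ↦ Σ_α f_α y_α`. -/
noncomputable def rieszFunctional {n : ℕ} (y : (Fin n →₀ ℕ) → ℝ)
    (f : MvPolynomial (Fin n) ℝ) : ℝ :=
  ∑ α ∈ f.support, f.coeff α * y α

namespace MomentAux

variable {n : ℕ}

lemma riesz_eq_lc (y : (Fin n →₀ ℕ) → ℝ) (f : MvPolynomial (Fin n) ℝ) :
    rieszFunctional y f = Finsupp.linearCombination ℝ y (AddMonoidAlgebra.coeff f) := by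
  rw [Finsupp.linearCombination_apply, Finsupp.sum]
  rfl

lemma continuous_eval (p : MvPolynomial (Fin n) ℝ) :
    Continuous (fun x : Fin n → ℝ => eval x p) := by
  simp only [eval_eq']
  exact continuous_finset_sum _ fun d _ => Continuous.mul continuous_const
    (continuous_finset_prod _ fun i _ => (continuous_apply i).pow _)

lemma ae_bound_of_compact {K : Set (Fin n → ℝ)} (hK : IsCompact K)
    {ρ : Measure (Fin n → ℝ)} (hρ : ρ Kᶜ = 0) {f : (Fin n → ℝ) → ℝ}
    (hf : Continuous f) : ∃ C : ℝ, 0 ≤ C ∧ ∀ᵐ x ∂ρ, ‖f x‖ ≤ C := by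
  obtain ⟨C, hC⟩ := hK.exists_bound_of_continuousOn hf.continuousOn
  refine ⟨max C 0, le_max_right _ _, ?_⟩
  rw [ae_iff]
  refine measure_mono_null (fun x hx => ?_) hρ
  simp only [Set.mem_setOf_eq, not_le] at hx
  intro hxK
  exact absurd ((hC x hxK).trans (le_max_left _ _)) (not_le.2 hx)

lemma integrable_eval {K : Set (Fin n → ℝ)} (hK : IsCompact K)
    {ρ : Measure (Fin n → ℝ)} [IsFiniteMeasure ρ] (hρ : ρ Kᶜ = 0)
    (p : MvPolynomial (Fin n) ℝ) :
    Integrable (fun x => eval x p) ρ := by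
  obtain ⟨C, -, hC⟩ := ae_bound_of_compact hK hρ (continuous_eval p)
  exact ⟨(continuous_eval p).aestronglyMeasurable, HasFiniteIntegral.of_bounded hC⟩

lemma memLp_eval {K : Set (Fin n → ℝ)} (hK : IsCompact K)
    {ρ : Measure (Fin n → ℝ)} [IsFiniteMeasure ρ] (hρ : ρ Kᶜ = 0)
    (p : MvPolynomial (Fin n) ℝ) :
    MemLp (fun x => eval x p) 2 ρ := by
  obtain ⟨C, -, hC⟩ := ae_bound_of_compact hK hρ (continuous_eval p)
  exact MemLp.of_bound (continuous_eval p).aestronglyMeasurable C hC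

lemma eval_monomial_one (α : Fin n →₀ ℕ) (x : Fin n → ℝ) :
    eval x (monomial α (1 : ℝ)) = ∏ i, x i ^ α i := by
  rw [eval_monomial, one_mul, Finsupp.prod_pow]

lemma riesz_integral {K : Set (Fin n → ℝ)} (hK : IsCompact K)
    {ρ : Measure (Fin n → ℝ)} [IsFiniteMeasure ρ] (hρ : ρ Kᶜ = 0)
    {w : (Fin n →₀ ℕ) → ℝ} (hw : ∀ α, w α = ∫ x, ∏ i, x i ^ α i ∂ρ)
    (p : MvPolynomial (Fin n) ℝ) :
    rieszFunctional w p = ∫ x, eval x p ∂ρ := by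
  have hint : ∀ α : Fin n →₀ ℕ, Integrable (fun x => ∏ i, x i ^ α i) ρ := by
    intro α
    have := integrable_eval hK hρ (monomial α (1 : ℝ))
    simpa only [eval_monomial_one] using this
  unfold rieszFunctional
  have : ∀ α ∈ p.support, p.coeff α * w α = ∫ x, p.coeff α * ∏ i, x i ^ α i ∂ρ := by
    intro α _
    rw [hw, integral_const_mul]
  rw [Finset.sum_congr rfl this, ← integral_finset_sum _
    (fun α _ => (hint α).const_mul _)]
  congr 1
  funext x
  rw [eval_eq']

lemma riesz_monomial (y : (Fin n →₀ ℕ) → ℝ) (α : Fin n →₀ ℕ) :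
    rieszFunctional y (monomial α (1 : ℝ)) = y α := by
  unfold rieszFunctional
  rw [support_monomial, if_neg one_ne_zero]
  simp [coeff_monomial]


/-- `rieszFunctional` as a linear map. -/
noncomputable def rieszLM (y : (Fin n →₀ ℕ) → ℝ) :
    MvPolynomial (Fin n) ℝ →ₗ[ℝ] ℝ where
  toFun := rieszFunctional y
  map_add' p q := by
    show rieszFunctional y (p + q) = rieszFunctional y p + rieszFunctional y q
    rw [riesz_eq_lc, riesz_eq_lc, riesz_eq_lc]
    exact map_add (Finsupp.linearCombination ℝ y) (AddMonoidAlgebra.coeff p) (AddMonoidAlgebra.coeff q)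
  map_smul' t p := by
    show rieszFunctional y (t • p) = t * rieszFunctional y p
    rw [riesz_eq_lc, riesz_eq_lc]
    simpa using map_smul (Finsupp.linearCombination ℝ y) t (AddMonoidAlgebra.coeff p)

lemma backward_rep {K : Set (Fin n → ℝ)} (hK : IsCompact K)
    {μ : Measure (Fin n → ℝ)} [IsFiniteMeasure μ] (hμK : μ Kᶜ = 0)
    {z : (Fin n →₀ ℕ) → ℝ}
    (hz : ∀ α : Fin n →₀ ℕ, z α = ∫ x, ∏ i, x i ^ α i ∂μ)
    (y : (Fin n →₀ ℕ) → ℝ) {κ : ℝ} (hκ0 : 0 ≤ κ)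
    (hpos : ∀ f : MvPolynomial (Fin n) ℝ, 0 ≤ rieszFunctional y (f * f))
    (hdom : ∀ f : MvPolynomial (Fin n) ℝ,
      rieszFunctional y (f * f) ≤ κ * rieszFunctional z (f * f)) :
    ∃ w : Lp ℝ 2 μ, ∀ p : MvPolynomial (Fin n) ℝ,
      ∫ x, eval x p * w x ∂μ = rieszFunctional y p := by
  haveI : Fact ((1:ℝ≥0∞) ≤ 2) := ⟨one_le_two⟩
  have hmem : ∀ p : MvPolynomial (Fin n) ℝ, MemLp (fun x => eval x p) 2 μ :=
    fun p => memLp_eval hK hμK p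
  -- the linear map into L²(μ)
  let T : MvPolynomial (Fin n) ℝ →ₗ[ℝ] Lp ℝ 2 μ :=
  { toFun := fun p => (hmem p).toLp _
    map_add' := fun p q => by
      show (hmem (p + q)).toLp _ = (hmem p).toLp _ + (hmem q).toLp _
      refine (MemLp.toLp_congr (hmem (p + q)) ((hmem p).add (hmem q))
        (Filter.EventuallyEq.of_eq (funext fun x => by simp))).trans ?_
      exact MemLp.toLp_add (hmem p) (hmem q)
    map_smul' := fun t p => by
      show (hmem (t • p)).toLp _ = t • (hmem p).toLp _
      refine (MemLp.toLp_congr (hmem (t • p)) ((hmem p).const_smul t)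
        (Filter.EventuallyEq.of_eq (funext fun x => by
          simp [smul_eq_mul]))).trans ?_
      exact MemLp.toLp_const_smul t (hmem p) }
  have hT : ∀ p, (T p : (Fin n → ℝ) → ℝ) =ᵐ[μ] fun x => eval x p :=
    fun p => MemLp.coeFn_toLp (hmem p)
  have hinner : ∀ p q : MvPolynomial (Fin n) ℝ,
      ⟪T p, T q⟫ = rieszFunctional z (p * q) := by
    intro p q
    rw [L2.inner_def, riesz_integral hK hμK hz]
    refine integral_congr_ae ?_
    filter_upwards [hT p, hT q] with x hx hy
    simp [hx, hy, RCLike.inner_apply, starRingEnd_apply, mul_comm]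
  have hnorm : ∀ p : MvPolynomial (Fin n) ℝ,
      ‖T p‖ ^ 2 = rieszFunctional z (p * p) := by
    intro p
    rw [← real_inner_self_eq_norm_sq, hinner]
  -- Cauchy-Schwarz for the Riesz functional
  have hy1 : 0 ≤ rieszFunctional y 1 := by simpa using hpos 1
  have hcs : ∀ p : MvPolynomial (Fin n) ℝ,
      (rieszFunctional y p) ^ 2 ≤ rieszFunctional y 1 * rieszFunctional y (p * p) := by
    intro p
    have key : ∀ t : ℝ, 0 ≤ rieszFunctional y 1 * (t * t) +
        (2 * rieszFunctional y p) * t + rieszFunctional y (p * p) := by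
      intro t
      have h0 := hpos (t • 1 + p)
      have hexp : (t • (1:MvPolynomial (Fin n) ℝ) + p) * (t • 1 + p) =
          (t * t) • (1:MvPolynomial (Fin n) ℝ) + (2 * t) • p + p * p := by
        simp only [Algebra.smul_def, map_mul, map_pow, map_ofNat]; ring
      rw [hexp] at h0
      have e1 : rieszFunctional y ((t * t) • (1:MvPolynomial (Fin n) ℝ) + (2 * t) • p + p * p)
          = rieszFunctional y 1 * (t * t) + (2 * rieszFunctional y p) * t
            + rieszFunctional y (p * p) := by
        have := map_add (rieszLM y) ((t * t) • (1:MvPolynomial (Fin n) ℝ) + (2 * t) • p) (p * p)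
        have h2 := map_add (rieszLM y) ((t * t) • (1:MvPolynomial (Fin n) ℝ)) ((2 * t) • p)
        have h3 := map_smul (rieszLM y) (t * t) (1:MvPolynomial (Fin n) ℝ)
        have h4 := map_smul (rieszLM y) (2 * t) p
        simp only [rieszLM, LinearMap.coe_mk, AddHom.coe_mk, smul_eq_mul] at this h2 h3 h4
        rw [this, h2, h3, h4]; ring
      rw [e1] at h0
      linarith
    have hd := discrim_le_zero key
    rw [discrim] at hd
    nlinarith [hd]
  -- norm bound for the functional
  set M : ℝ := Real.sqrt (κ * rieszFunctional y 1) with hM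
  have hbound : ∀ p : MvPolynomial (Fin n) ℝ,
      |rieszFunctional y p| ≤ M * ‖T p‖ := by
    intro p
    have h1 : (rieszFunctional y p) ^ 2 ≤ (κ * rieszFunctional y 1) * ‖T p‖ ^ 2 := by
      have h2 := hcs p
      have h3 : rieszFunctional y (p * p) ≤ κ * rieszFunctional z (p * p) := hdom p
      have h4 : rieszFunctional z (p * p) = ‖T p‖ ^ 2 := (hnorm p).symm
      rw [h4] at h3
      nlinarith [mul_le_mul_of_nonneg_left h3 hy1, h2]
    calc |rieszFunctional y p| = Real.sqrt ((rieszFunctional y p) ^ 2) :=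
          (Real.sqrt_sq_eq_abs _).symm
      _ ≤ Real.sqrt ((κ * rieszFunctional y 1) * ‖T p‖ ^ 2) := Real.sqrt_le_sqrt h1
      _ = M * ‖T p‖ := by
          rw [Real.sqrt_mul (by positivity) , Real.sqrt_sq (norm_nonneg _)]
  -- kernel inclusion and induced functional on range T
  have hker : LinearMap.ker T ≤ LinearMap.ker (rieszLM y) := by
    intro p hp
    rw [LinearMap.mem_ker] at hp ⊢
    have := hbound p
    rw [hp, norm_zero, mul_zero] at this
    have : |rieszFunctional y p| ≤ 0 := this
    have habs := abs_nonneg (rieszFunctional y p)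
    have : rieszFunctional y p = 0 := by
      have := abs_eq_zero.mp (le_antisymm this habs)
      exact this
    exact this
  let ℓ : LinearMap.range T →ₗ[ℝ] ℝ :=
    ((LinearMap.ker T).liftQ (rieszLM y) hker).comp T.quotKerEquivRange.symm.toLinearMap
  have hℓ : ∀ p : MvPolynomial (Fin n) ℝ,
      ℓ ⟨T p, LinearMap.mem_range_self T p⟩ = rieszFunctional y p := by
    intro p
    have h1 : T.quotKerEquivRange (Submodule.Quotient.mk p)
        = ⟨T p, LinearMap.mem_range_self T p⟩ :=
      Subtype.ext (LinearMap.quotKerEquivRange_apply_mk T p)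
    show ((LinearMap.ker T).liftQ (rieszLM y) hker)
      (T.quotKerEquivRange.symm ⟨T p, LinearMap.mem_range_self T p⟩) = _
    rw [← h1, LinearEquiv.symm_apply_apply, Submodule.liftQ_apply]
    rfl
  have hℓb : ∀ v : LinearMap.range T, ‖ℓ v‖ ≤ M * ‖v‖ := by
    rintro ⟨-, p, rfl⟩
    have h1 : (⟨T p, LinearMap.mem_range_self T p⟩ : LinearMap.range T)
        = ⟨T p, ⟨p, rfl⟩⟩ := rfl
    rw [← h1, hℓ]
    exact hbound p
  let φ₀ : LinearMap.range T →L[ℝ] ℝ := LinearMap.mkContinuous ℓ M hℓb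
  obtain ⟨G, hG, -⟩ := exists_extension_norm_eq (LinearMap.range T) φ₀
  let w := (InnerProductSpace.toDual ℝ (Lp ℝ 2 μ)).symm G
  refine ⟨w, fun p => ?_⟩
  have h1 : ⟪w, T p⟫ = G (T p) := by
    show ⟪(InnerProductSpace.toDual ℝ (Lp ℝ 2 μ)).symm G, T p⟫ = G (T p)
    rw [← InnerProductSpace.toDual_apply_apply, LinearIsometryEquiv.apply_symm_apply]
  have h2 : G (T p) = rieszFunctional y p := by
    have := hG ⟨T p, LinearMap.mem_range_self T p⟩
    rw [this]
    show ℓ _ = _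
    exact hℓ p
  have h3 : ⟪w, T p⟫ = ∫ x, eval x p * w x ∂μ := by
    rw [L2.inner_def]
    refine integral_congr_ae ?_
    filter_upwards [hT p] with x hx
    simp [hx, RCLike.inner_apply, starRingEnd_apply, mul_comm]
  rw [← h3, h1, h2]

/-- Polynomials approximate continuous functions uniformly on a compact set. -/
lemma exists_poly_near {K : Set (Fin n → ℝ)} (hK : IsCompact K)
    (s : (Fin n → ℝ) → ℝ) (hs : Continuous s) {ε : ℝ} (hε : 0 < ε) :
    ∃ p : MvPolynomial (Fin n) ℝ, ∀ x ∈ K, |eval x p - s x| ≤ ε := by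
  haveI : CompactSpace K := isCompact_iff_compactSpace.mp hK
  let coords : Fin n → C(K, ℝ) := fun i =>
    ⟨fun xK => (xK : Fin n → ℝ) i, (continuous_apply i).comp continuous_subtype_val⟩
  let A : Subalgebra ℝ C(K, ℝ) := (MvPolynomial.aeval coords).range
  have haeval : ∀ (p : MvPolynomial (Fin n) ℝ) (xK : K),
      (MvPolynomial.aeval coords p) xK = eval (xK : Fin n → ℝ) p := by
    intro p xK
    induction p using MvPolynomial.induction_on with
    | C a => simp [coords]
    | add p q hp hq => simp [hp, hq]
    | mul_X p i hp => simp [hp, coords]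
  have hsep : A.SeparatesPoints := by
    rintro xK yK hxy
    have hex : ∃ i, (xK : Fin n → ℝ) i ≠ (yK : Fin n → ℝ) i := by
      by_contra hc
      push_neg at hc
      exact hxy (Subtype.ext (funext hc))
    obtain ⟨i, hi⟩ := hex
    refine ⟨coords i, ⟨coords i, ⟨MvPolynomial.X i, by simp⟩, rfl⟩, hi⟩
  obtain ⟨g0, hg0⟩ := ContinuousMap.exists_mem_subalgebra_near_continuous_of_separatesPoints
    A hsep (fun xK : K => s xK) (hs.comp continuous_subtype_val) ε hε
  obtain ⟨p, hp⟩ := g0.2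
  have hp' : MvPolynomial.aeval coords p = (g0 : C(K, ℝ)) := hp
  refine ⟨p, fun x hx => ?_⟩
  have := hg0 ⟨x, hx⟩
  rw [← hp', haeval] at this
  simpa [Real.norm_eq_abs] using this.le

lemma ae_nonneg_of_forall_sq {K : Set (Fin n → ℝ)} (hK : IsCompact K)
    {μ : Measure (Fin n → ℝ)} [IsFiniteMeasure μ] (hμK : μ Kᶜ = 0)
    {W : (Fin n → ℝ) → ℝ} (hW : MemLp W 2 μ)
    (hpos : ∀ p : MvPolynomial (Fin n) ℝ, 0 ≤ ∫ x, (eval x p) ^ 2 * W x ∂μ) :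
    ∀ᵐ x ∂μ, 0 ≤ W x := by
  haveI : Fact ((1:ℝ≥0∞) ≤ 2) := ⟨one_le_two⟩
  have hWint : Integrable W μ := hW.integrable one_le_two
  have haeK : ∀ᵐ x ∂μ, x ∈ K := by
    rw [ae_iff]; exact measure_mono_null (fun x hx => hx) hμK
  set I : ℝ := ∫ x, |W x| ∂μ with hI
  have hI0 : 0 ≤ I := integral_nonneg fun x => abs_nonneg _
  -- Step A : positivity against bounded continuous functions nonneg on K
  have stepA : ∀ c : (Fin n → ℝ) → ℝ, Continuous c → (∃ Cb, ∀ x, |c x| ≤ Cb) →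
      (∀ x ∈ K, 0 ≤ c x) → 0 ≤ ∫ x, c x * W x ∂μ := by
    intro c hc hcb hcK
    obtain ⟨Cb, hCb⟩ := hcb
    have hint_cW : Integrable (fun x => c x * W x) μ :=
      hWint.bdd_mul hc.aestronglyMeasurable
        (ae_of_all _ fun x => by simpa [Real.norm_eq_abs] using hCb x)
    set s : (Fin n → ℝ) → ℝ := fun x => Real.sqrt (c x) with hs
    have hscont : Continuous s := Real.continuous_sqrt.comp hc
    obtain ⟨Cs0, hCs0⟩ := hK.exists_bound_of_continuousOn hscont.continuousOn
    set Cs : ℝ := max Cs0 0 with hCsdef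
    have hCsnn : 0 ≤ Cs := le_max_right _ _
    have hCs : ∀ x ∈ K, |s x| ≤ Cs := fun x hx =>
      le_trans (by simpa [Real.norm_eq_abs] using hCs0 x hx) (le_max_left _ _)
    refine le_of_forall_pos_le_add ?_
    intro δ hδ
    have hA0 : (0:ℝ) < (1 + 2 * Cs) * I + 1 := by positivity
    set ε : ℝ := min 1 (δ / ((1 + 2 * Cs) * I + 1)) with hεdef
    have hε0 : 0 < ε := lt_min one_pos (div_pos hδ hA0)
    have hε1 : ε ≤ 1 := min_le_left _ _
    obtain ⟨f, hf⟩ := exists_poly_near hK s hscont hε0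
    have hptw : ∀ x ∈ K, |(eval x f) ^ 2 - c x| ≤ ε * (ε + 2 * Cs) := by
      intro x hx
      have hs2 : s x ^ 2 = c x := Real.sq_sqrt (hcK x hx)
      have h1 : (eval x f) ^ 2 - c x = (eval x f - s x) * (eval x f + s x) := by
        rw [← hs2]; ring
      rw [h1, abs_mul]
      have h2 : |eval x f - s x| ≤ ε := hf x hx
      have h3 : |eval x f + s x| ≤ ε + 2 * Cs := by
        have e : eval x f + s x = (eval x f - s x) + 2 * s x := by ring
        rw [e]
        calc |(eval x f - s x) + 2 * s x| ≤ |eval x f - s x| + |2 * s x| := abs_add_le _ _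
          _ ≤ ε + 2 * Cs := by
              rw [abs_mul, abs_two]
              have := hCs x hx
              linarith [h2]
      exact mul_le_mul h2 h3 (abs_nonneg _) hε0.le
    -- integrability of f² W via L²
    have hf2 : MemLp (fun x => (eval x f) ^ 2) 2 μ := by
      have hm := memLp_eval hK hμK (f * f)
      have : (fun x => eval x (f * f)) = fun x => (eval x f) ^ 2 := by
        funext x; simp [sq]
      rwa [this] at hm
    have hint_f2W : Integrable (fun x => (eval x f) ^ 2 * W x) μ := by
      have := L2.integrable_inner (𝕜 := ℝ) (hf2.toLp _) (hW.toLp _)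
      refine this.congr ?_
      filter_upwards [hf2.coeFn_toLp, hW.coeFn_toLp] with x h1 h2
      simp [h1, h2, RCLike.inner_apply, starRingEnd_apply, mul_comm]
    have hdiff : Integrable (fun x => ((eval x f) ^ 2 - c x) * W x) μ := by
      have := hint_f2W.sub hint_cW
      refine this.congr (ae_of_all _ fun x => ?_)
      simp only [Pi.sub_apply]
      ring
    have habs : |∫ x, ((eval x f) ^ 2 - c x) * W x ∂μ| ≤ ε * (ε + 2 * Cs) * I := by
      calc |∫ x, ((eval x f) ^ 2 - c x) * W x ∂μ|
          ≤ ∫ x, ‖((eval x f) ^ 2 - c x) * W x‖ ∂μ := by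
            rw [← Real.norm_eq_abs]
            exact norm_integral_le_integral_norm _
        _ ≤ ∫ x, ε * (ε + 2 * Cs) * |W x| ∂μ := by
            refine integral_mono_ae hdiff.norm ((hWint.abs).const_mul _) ?_
            filter_upwards [haeK] with x hx
            rw [norm_mul, Real.norm_eq_abs, Real.norm_eq_abs]
            exact mul_le_mul_of_nonneg_right (hptw x hx) (abs_nonneg _)
        _ = ε * (ε + 2 * Cs) * I := integral_const_mul _ _
    have hsplit : ∫ x, c x * W x ∂μ =
        (∫ x, (eval x f) ^ 2 * W x ∂μ) - ∫ x, ((eval x f) ^ 2 - c x) * W x ∂μ := by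
      rw [← integral_sub hint_f2W hdiff]
      congr 1
      funext x
      ring
    have h1 : 0 ≤ (∫ x, c x * W x ∂μ) + ε * (ε + 2 * Cs) * I := by
      have h0 := hpos f
      have h2 : ∫ x, ((eval x f) ^ 2 - c x) * W x ∂μ ≤ ε * (ε + 2 * Cs) * I :=
        (abs_le.mp habs).2
      linarith [hsplit]
    have h2 : ε * (ε + 2 * Cs) * I ≤ δ := by
      have e1 : ε * (ε + 2 * Cs) * I ≤ ε * ((1 + 2 * Cs) * I) := by
        nlinarith [mul_le_mul_of_nonneg_right
          (mul_le_mul_of_nonneg_left hε1 hε0.le) hI0, hI0, hε0.le, hCsnn]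
      have e2 : ε ≤ δ / ((1 + 2 * Cs) * I + 1) := min_le_right _ _
      have e3 : ε * ((1 + 2 * Cs) * I) ≤ (δ / ((1 + 2 * Cs) * I + 1)) * ((1 + 2 * Cs) * I) :=
        mul_le_mul_of_nonneg_right e2 (by positivity)
      have e4 : (δ / ((1 + 2 * Cs) * I + 1)) * ((1 + 2 * Cs) * I)
          ≤ (δ / ((1 + 2 * Cs) * I + 1)) * ((1 + 2 * Cs) * I + 1) :=
        mul_le_mul_of_nonneg_left (by linarith) (by positivity)
      have e5 : (δ / ((1 + 2 * Cs) * I + 1)) * ((1 + 2 * Cs) * I + 1) = δ :=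
        div_mul_cancel₀ _ hA0.ne'
      linarith
    linarith
  -- Step B : apply to approximations of the negative part of W
  set Wm : (Fin n → ℝ) → ℝ := fun x => max (-W x) 0 with hWmdef
  have habs' : ∀ a : ℝ, ‖max (-a) 0‖ ≤ ‖a‖ := by
    intro a
    rw [Real.norm_eq_abs, Real.norm_eq_abs, abs_of_nonneg (le_max_right _ _)]
    rcases le_total a 0 with h | h
    · rw [max_eq_left (by linarith : (0:ℝ) ≤ -a), abs_of_nonpos h]
    · rw [max_eq_right (by linarith : -a ≤ (0:ℝ))]
      exact abs_nonneg _
  have habsWm : ∀ x, ‖Wm x‖ ≤ ‖W x‖ := fun x => habs' (W x)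
  have hWm : MemLp Wm 2 μ :=
    hW.of_le (hW.aestronglyMeasurable.neg.sup aestronglyMeasurable_const)
      (ae_of_all _ habsWm)
  set WL := hW.toLp _ with hWL
  set WmL := hWm.toLp _ with hWmL
  have innerWm : ⟪WmL, WL⟫ = -(‖WmL‖ ^ 2) := by
    have i2 : ⟪WmL, WL⟫ = ∫ x, Wm x * W x ∂μ := by
      rw [L2.inner_def]
      refine integral_congr_ae ?_
      filter_upwards [hWm.coeFn_toLp, hW.coeFn_toLp] with x h1 h2
      simp [h1, h2, RCLike.inner_apply, starRingEnd_apply, hWL, hWmL, mul_comm]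
    have i4 : ⟪WmL, WmL⟫ = ∫ x, Wm x * Wm x ∂μ := by
      rw [L2.inner_def]
      refine integral_congr_ae ?_
      filter_upwards [hWm.coeFn_toLp] with x h1
      simp [h1, RCLike.inner_apply, starRingEnd_apply, hWmL, sq]
    have i3 : ∫ x, Wm x * W x ∂μ = -∫ x, Wm x * Wm x ∂μ := by
      rw [← integral_neg]
      refine integral_congr_ae (ae_of_all _ fun x => ?_)
      show Wm x * W x = -(Wm x * Wm x)
      rcases le_total (W x) 0 with h | h
      · have hWx : Wm x = -W x := max_eq_left (by linarith : (0:ℝ) ≤ -W x)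
        rw [hWx]; ring
      · have hWx : Wm x = 0 := max_eq_right (by linarith : -W x ≤ (0:ℝ))
        rw [hWx]; ring
    rw [i2, i3, ← i4, real_inner_self_eq_norm_sq]
  have key : ∀ δ : ℝ, 0 < δ → ‖WmL‖ ^ 2 ≤ δ * ‖WL‖ := by
    intro δ hδ
    obtain ⟨b, hb_near, hb_mem⟩ := hWm.exists_boundedContinuous_eLpNorm_sub_le
      (by norm_num : (2:ℝ≥0∞) ≠ ⊤) ((ENNReal.ofReal_pos.mpr hδ).ne')
    set c : (Fin n → ℝ) → ℝ := fun x => max (b x) 0 with hcdef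
    have hc_cont : Continuous c := b.continuous.max continuous_const
    have hc_bdd : ∃ Cb, ∀ x, |c x| ≤ Cb := by
      refine ⟨‖b‖, fun x => ?_⟩
      simp only [hcdef]
      rw [abs_of_nonneg (le_max_right _ _)]
      rcases le_total (b x) 0 with h | h
      · rw [max_eq_right h]; exact norm_nonneg _
      · rw [max_eq_left h]
        have := b.norm_coe_le_norm x
        rwa [Real.norm_eq_abs, abs_of_nonneg h] at this
    obtain ⟨Cb, hCb⟩ := hc_bdd
    have hcMem : MemLp c 2 μ :=
      MemLp.of_bound hc_cont.aestronglyMeasurable Cb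
        (ae_of_all _ fun x => by simpa [Real.norm_eq_abs] using hCb x)
    set cL := hcMem.toLp _ with hcL
    have hposc : 0 ≤ ∫ x, c x * W x ∂μ :=
      stepA c hc_cont ⟨Cb, hCb⟩ (fun x _ => le_max_right _ _)
    have i1 : ⟪cL, WL⟫ = ∫ x, c x * W x ∂μ := by
      rw [L2.inner_def]
      refine integral_congr_ae ?_
      filter_upwards [hcMem.coeFn_toLp, hW.coeFn_toLp] with x h1 h2
      simp [h1, h2, RCLike.inner_apply, starRingEnd_apply, hcL, hWL, mul_comm]
    have hdist : ‖cL - WmL‖ ≤ δ := by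
      have hcoe : (cL - WmL : Lp ℝ 2 μ) =ᵐ[μ] fun x => c x - Wm x := by
        filter_upwards [Lp.coeFn_sub cL WmL, hcMem.coeFn_toLp, hWm.coeFn_toLp]
          with x h1 h2 h3
        rw [h1, Pi.sub_apply, h2, h3]
      rw [Lp.norm_def, eLpNorm_congr_ae hcoe]
      have hmono : eLpNorm (fun x => c x - Wm x) 2 μ ≤ eLpNorm (Wm - ⇑b) 2 μ := by
        refine eLpNorm_mono_ae (ae_of_all _ fun x => ?_)
        rw [Real.norm_eq_abs, Pi.sub_apply, Real.norm_eq_abs]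
        have hWm0 : Wm x = max (Wm x) 0 := (max_eq_left (le_max_right (-W x) 0)).symm
        calc |c x - Wm x| = |max (b x) 0 - max (Wm x) 0| := by rw [← hWm0]
          _ ≤ |b x - Wm x| := abs_max_sub_max_le_abs _ _ _
          _ = |Wm x - b x| := abs_sub_comm _ _
      have hle : eLpNorm (fun x => c x - Wm x) 2 μ ≤ ENNReal.ofReal δ :=
        le_trans hmono hb_near
      calc (eLpNorm (fun x => c x - Wm x) 2 μ).toReal
          ≤ (ENNReal.ofReal δ).toReal :=
            ENNReal.toReal_mono ENNReal.ofReal_ne_top hle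
        _ = δ := ENNReal.toReal_ofReal hδ.le
    have hCS : |⟪cL - WmL, WL⟫| ≤ ‖cL - WmL‖ * ‖WL‖ := abs_real_inner_le_norm _ _
    have hsub : ⟪cL - WmL, WL⟫ = ⟪cL, WL⟫ - ⟪WmL, WL⟫ := inner_sub_left _ _ _
    have h0 : 0 ≤ ⟪cL, WL⟫ := by rw [i1]; exact hposc
    have h1 : ⟪cL - WmL, WL⟫ ≤ δ * ‖WL‖ := by
      refine le_trans (le_abs_self _) (le_trans hCS ?_)
      exact mul_le_mul_of_nonneg_right hdist (norm_nonneg _)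
    have h2 : -(‖WmL‖ ^ 2) = ⟪cL, WL⟫ - ⟪cL - WmL, WL⟫ := by
      rw [hsub, innerWm]; ring
    nlinarith [h0, h1, h2]
  have hWmL0 : WmL = 0 := by
    have h1 : ‖WmL‖ ^ 2 ≤ 0 := by
      refine le_of_forall_pos_le_add ?_
      intro ε hε
      have := key (ε / (‖WL‖ + 1)) (div_pos hε (by positivity))
      have h2 : (ε / (‖WL‖ + 1)) * ‖WL‖ ≤ ε := by
        rw [div_mul_eq_mul_div, div_le_iff₀ (by positivity)]
        nlinarith [norm_nonneg WL, hε]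
      linarith
    have h3 : ‖WmL‖ = 0 := by nlinarith [norm_nonneg WmL]
    exact norm_eq_zero.mp h3
  have hWm0 : Wm =ᵐ[μ] 0 := by
    have h1 := hWm.coeFn_toLp (p := 2)
    rw [show hWm.toLp Wm = WmL from rfl, hWmL0] at h1
    exact h1.symm.trans (Lp.coeFn_zero _ _ _)
  filter_upwards [hWm0] with x hx
  have h1 : -W x ≤ Wm x := le_max_left _ _
  have h2 : Wm x = 0 := by simpa using hx
  linarith

lemma forward {m : ℕ} (g : Fin m → MvPolynomial (Fin n) ℝ)
    (K : Set (Fin n → ℝ))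
    (hKdef : K = {x : Fin n → ℝ | ∀ j : Fin m, 0 ≤ eval x (g j)})
    (hK : IsCompact K)
    (μ : Measure (Fin n → ℝ)) [IsFiniteMeasure μ] (hμK : μ Kᶜ = 0)
    (z : (Fin n →₀ ℕ) → ℝ)
    (hz : ∀ α : Fin n →₀ ℕ, z α = ∫ x, ∏ i, x i ^ α i ∂μ)
    (y : (Fin n →₀ ℕ) → ℝ)
    (H : ∃ ν : Measure (Fin n → ℝ), ν Kᶜ = 0 ∧
        (∀ α : Fin n →₀ ℕ, y α = ∫ x, ∏ i, x i ^ α i ∂ν) ∧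
        ∃ h : (Fin n → ℝ) → ℝ, Measurable h ∧
          ν = μ.withDensity (fun x => ENNReal.ofReal (h x)) ∧
          ∃ C : ℝ, ∀ᵐ x ∂μ, 0 ≤ h x ∧ h x ≤ C) :
    ∃ κ : ℝ, ∀ (J : Finset (Fin m)) (f : MvPolynomial (Fin n) ℝ),
        0 ≤ rieszFunctional y (f ^ 2 * ∏ j ∈ J, g j) ∧
        rieszFunctional y (f ^ 2 * ∏ j ∈ J, g j) ≤
          κ * rieszFunctional z (f ^ 2 * ∏ j ∈ J, g j) := by
  obtain ⟨ν, hνK, hνmom, h, hmeas, hνdef, C, hC⟩ := H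
  set κ := max C 0 with hκdef
  have hCκ : C ≤ κ := le_max_left _ _
  have hκ0 : 0 ≤ κ := le_max_right _ _
  -- ν is a finite measure
  have hνfin : IsFiniteMeasure ν := by
    constructor
    rw [hνdef, withDensity_apply _ MeasurableSet.univ, Measure.restrict_univ]
    calc ∫⁻ x, ENNReal.ofReal (h x) ∂μ ≤ ∫⁻ _, ENNReal.ofReal κ ∂μ := by
          refine lintegral_mono_ae (hC.mono fun x hx => ?_)
          exact ENNReal.ofReal_le_ofReal (hx.2.trans hCκ)
      _ < ⊤ := by
          rw [lintegral_const]
          exact ENNReal.mul_lt_top ENNReal.ofReal_lt_top (measure_lt_top μ _)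
  have hy : ∀ q, rieszFunctional y q = ∫ x, eval x q ∂ν :=
    fun q => riesz_integral hK hνK hνmom q
  have hz' : ∀ q, rieszFunctional z q = ∫ x, eval x q ∂μ :=
    fun q => riesz_integral hK hμK hz q
  refine ⟨κ, fun J f => ?_⟩
  set p := f ^ 2 * ∏ j ∈ J, g j with hpdef
  have hpK : ∀ x ∈ K, 0 ≤ eval x p := by
    intro x hx
    rw [hKdef] at hx
    rw [hpdef, map_mul, map_pow, map_prod]
    exact mul_nonneg (sq_nonneg _) (Finset.prod_nonneg fun j _ => hx j)
  have haeν : ∀ᵐ x ∂ν, x ∈ K := by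
    rw [ae_iff]
    exact measure_mono_null (fun x hx => hx) hνK
  constructor
  · rw [hy]
    exact integral_nonneg_of_ae (haeν.mono fun x hx => hpK x hx)
  · rw [hy, hz']
    -- rewrite ∫ … dν as a weighted integral over μ
    have hden : (fun x => ENNReal.ofReal (h x)) =
        (fun x => ((Real.toNNReal (h x) : ℝ≥0) : ℝ≥0∞)) := rfl
    have hkey : ∫ x, eval x p ∂ν = ∫ x, (Real.toNNReal (h x) : ℝ) * eval x p ∂μ := by
      rw [hνdef, hden, integral_withDensity_eq_integral_smul
        (show Measurable fun x => Real.toNNReal (h x) from measurable_real_toNNReal.comp hmeas)]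
      simp [NNReal.smul_def]
    rw [hkey]
    obtain ⟨B, hB0, hB⟩ := ae_bound_of_compact hK hμK (continuous_eval p)
    have hae : ∀ᵐ x ∂μ, x ∈ K := by
      rw [ae_iff]
      exact measure_mono_null (fun x hx => hx) hμK
    have hint1 : Integrable (fun x => (Real.toNNReal (h x) : ℝ) * eval x p) μ := by
      refine ⟨(measurable_real_toNNReal.comp hmeas).coe_nnreal_real.aestronglyMeasurable.mul
        (continuous_eval p).aestronglyMeasurable, HasFiniteIntegral.of_bounded
        (C := κ * B) ?_⟩
      filter_upwards [hB, hC] with x hxB hxC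
      rw [norm_mul]
      refine mul_le_mul ?_ hxB (norm_nonneg _) hκ0
      rw [Real.norm_eq_abs, abs_of_nonneg (by positivity), Real.coe_toNNReal',
        max_le_iff]
      exact ⟨hxC.2.trans hCκ, hκ0⟩
    have hint2 : Integrable (fun x => κ * eval x p) μ :=
      (integrable_eval hK hμK p).const_mul κ
    calc ∫ x, (Real.toNNReal (h x) : ℝ) * eval x p ∂μ
        ≤ ∫ x, κ * eval x p ∂μ := by
          refine integral_mono_ae hint1 hint2 ?_
          filter_upwards [hC, hae] with x hxC hxK
          rw [Real.coe_toNNReal _ hxC.1]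
          exact mul_le_mul_of_nonneg_right (hxC.2.trans hCκ) (hpK x hxK)
      _ = κ * ∫ x, eval x p ∂μ := integral_const_mul _ _

end MomentAux

open MomentAux in
/-- **Theorem 3.1(a)** (Lasserre, "The moment problem with bounded density").
Let `K ⊂ ℝⁿ` be a compact basic semi-algebraic set `K = {x : g_j(x) ≥ 0, j = 1,…,m}`,
let `μ` be a finite Borel measure on `K` with moment sequence `z`, and let `y` be a real
sequence.  Then `y` has a representing Borel measure `ν` on `K` which is uniformly
absolutely continuous with respect to `μ` (i.e. `dν = h dμ` with `0 ≤ h ∈ L_∞(K,μ)`)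
if and only if there is a scalar `κ` such that for every `J ⊆ {1,…,m}` and every
polynomial `f`: `0 ≤ L_y(f² g_J) ≤ κ L_z(f² g_J)`, where `g_J = ∏_{j∈J} g_j`. -/
theorem moment_problem_bounded_density_compact_schmudgen
    {n m : ℕ} (g : Fin m → MvPolynomial (Fin n) ℝ)
    (K : Set (Fin n → ℝ))
    (hKdef : K = {x : Fin n → ℝ | ∀ j : Fin m, 0 ≤ eval x (g j)})
    (hK : IsCompact K)
    (μ : Measure (Fin n → ℝ)) [IsFiniteMeasure μ] (hμK : μ Kᶜ = 0)
    (z : (Fin n →₀ ℕ) → ℝ)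
    (hz : ∀ α : Fin n →₀ ℕ, z α = ∫ x, ∏ i, x i ^ α i ∂μ)
    (y : (Fin n →₀ ℕ) → ℝ) :
    (∃ ν : Measure (Fin n → ℝ), ν Kᶜ = 0 ∧
        (∀ α : Fin n →₀ ℕ, y α = ∫ x, ∏ i, x i ^ α i ∂ν) ∧
        ∃ h : (Fin n → ℝ) → ℝ, Measurable h ∧
          ν = μ.withDensity (fun x => ENNReal.ofReal (h x)) ∧
          ∃ C : ℝ, ∀ᵐ x ∂μ, 0 ≤ h x ∧ h x ≤ C) ↔
    (∃ κ : ℝ, ∀ (J : Finset (Fin m)) (f : MvPolynomial (Fin n) ℝ),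
        0 ≤ rieszFunctional y (f ^ 2 * ∏ j ∈ J, g j) ∧
        rieszFunctional y (f ^ 2 * ∏ j ∈ J, g j) ≤
          κ * rieszFunctional z (f ^ 2 * ∏ j ∈ J, g j)) := by
  constructor
  · exact forward g K hKdef hK μ hμK z hz y
  · rintro ⟨κ₀, hκ₀⟩
    set κ : ℝ := max κ₀ 0 with hκdef
    have hκ0 : 0 ≤ κ := le_max_right _ _
    have hzint : ∀ q, rieszFunctional z q = ∫ x, eval x q ∂μ :=
      fun q => riesz_integral hK hμK hz q
    have hzsq : ∀ f : MvPolynomial (Fin n) ℝ, 0 ≤ rieszFunctional z (f * f) := by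
      intro f
      rw [hzint]
      refine integral_nonneg fun x => ?_
      rw [map_mul]
      exact mul_self_nonneg _
    have hff : ∀ f : MvPolynomial (Fin n) ℝ,
        f ^ 2 * ∏ j ∈ (∅ : Finset (Fin m)), g j = f * f := by
      intro f
      rw [Finset.prod_empty, mul_one, sq]
    have hpos : ∀ f : MvPolynomial (Fin n) ℝ, 0 ≤ rieszFunctional y (f * f) := by
      intro f
      have := (hκ₀ ∅ f).1
      rwa [hff] at this
    have hdom : ∀ f : MvPolynomial (Fin n) ℝ,
        rieszFunctional y (f * f) ≤ κ * rieszFunctional z (f * f) := by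
      intro f
      have h1 := (hκ₀ ∅ f).2
      rw [hff] at h1
      exact h1.trans (mul_le_mul_of_nonneg_right (le_max_left _ _) (hzsq f))
    obtain ⟨w, hw⟩ := backward_rep hK hμK hz y hκ0 hpos hdom
    haveI : Fact ((1:ℝ≥0∞) ≤ 2) := ⟨one_le_two⟩
    have hWmem : MemLp (⇑w : (Fin n → ℝ) → ℝ) 2 μ := Lp.memLp w
    have hsq_eq : ∀ p : MvPolynomial (Fin n) ℝ,
        (fun x : Fin n → ℝ => eval x (p * p)) = fun x => (eval x p) ^ 2 := by
      intro p; funext x; simp [sq]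
    have hsqw : ∀ p : MvPolynomial (Fin n) ℝ,
        ∫ x, (eval x p) ^ 2 * w x ∂μ = rieszFunctional y (p * p) := by
      intro p
      have h0 := hw (p * p)
      rw [show (fun x : Fin n → ℝ => eval x (p * p) * w x)
          = fun x => (eval x p) ^ 2 * w x by funext x; simp [sq]] at h0
      exact h0
    have hint_sq : ∀ p : MvPolynomial (Fin n) ℝ,
        Integrable (fun x => (eval x p) ^ 2) μ := by
      intro p
      have h0 := integrable_eval hK hμK (p * p)
      rwa [hsq_eq p] at h0
    have hint_sqw : ∀ p : MvPolynomial (Fin n) ℝ,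
        Integrable (fun x => (eval x p) ^ 2 * w x) μ := by
      intro p
      have hf2 : MemLp (fun x => (eval x p) ^ 2) 2 μ := by
        have h0 := memLp_eval hK hμK (p * p)
        rwa [hsq_eq p] at h0
      have h0 := L2.integrable_inner (𝕜 := ℝ) (hf2.toLp _) w
      refine h0.congr ?_
      filter_upwards [hf2.coeFn_toLp] with x h1
      simp [h1, RCLike.inner_apply, starRingEnd_apply, mul_comm]
    have hw_pos : ∀ᵐ x ∂μ, 0 ≤ w x := by
      refine ae_nonneg_of_forall_sq hK hμK hWmem fun p => ?_
      rw [hsqw p]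
      exact hpos p
    have hw_upper : ∀ᵐ x ∂μ, 0 ≤ κ - w x := by
      refine ae_nonneg_of_forall_sq hK hμK (W := fun x => κ - w x)
        ((memLp_const κ).sub hWmem) fun p => ?_
      have e : (fun x : Fin n → ℝ => (eval x p) ^ 2 * (κ - w x))
          = fun x => κ * (eval x p) ^ 2 - (eval x p) ^ 2 * w x := by
        funext x; ring
      rw [e, integral_sub ((hint_sq p).const_mul κ) (hint_sqw p),
        integral_const_mul, hsqw p]
      have h1 : ∫ x, (eval x p) ^ 2 ∂μ = rieszFunctional z (p * p) := by
        rw [hzint, hsq_eq p]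
      rw [h1]
      have := hdom p
      linarith
    -- measurable representative of w
    have hsm := Lp.aestronglyMeasurable w
    set h : (Fin n → ℝ) → ℝ := hsm.mk ⇑w with hhdef
    have hmeas : Measurable h := hsm.stronglyMeasurable_mk.measurable
    have hhw : ⇑w =ᵐ[μ] h := hsm.ae_eq_mk
    refine ⟨μ.withDensity (fun x => ENNReal.ofReal (h x)), ?_, ?_, h, hmeas, rfl, κ, ?_⟩
    · rw [withDensity_apply _ hK.isClosed.measurableSet.compl]
      exact setLIntegral_measure_zero _ _ hμK
    · intro α
      have h1 : y α = ∫ x, eval x (monomial α (1:ℝ)) * w x ∂μ := by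
        rw [hw, riesz_monomial]
      rw [h1, show (fun x : Fin n → ℝ => ENNReal.ofReal (h x))
          = (fun x => ((Real.toNNReal (h x) : ℝ≥0) : ℝ≥0∞)) from rfl,
        integral_withDensity_eq_integral_smul
        (show Measurable fun x => Real.toNNReal (h x) from
          measurable_real_toNNReal.comp hmeas)]
      refine integral_congr_ae ?_
      filter_upwards [hw_pos, hhw] with x h2 h3
      rw [eval_monomial_one, NNReal.smul_def, smul_eq_mul, Real.coe_toNNReal',
        ← h3, max_eq_left h2, mul_comm]
    · filter_upwards [hw_pos, hw_upper, hhw] with x h1 h2 h3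
      constructor
      · rw [← h3]; exact h1
      · rw [← h3]; linarith
end

section
/- Let K ⊂ ℝⁿ be a compact basic semi-algebraic set K = {x ∈ ℝⁿ : g_j(x) ≥ 0, j = 1,…,m}, and assume there exists N > 0 such that the polynomial N − ‖X‖² belongs to the quadratic module Q(g) generated by g_1,…,g_m. Let μ be a finite Borel measure on K with moment sequence z = (z_α), and let y = (y_α) be a real sequence. Then y has a representing Borel measure ν on K that is uniformly absolutely continuous with respect to μ if and only if there exists a scalar κ such that 0 ≤ L_y(f² g_j) ≤ κ L_z(f² g_j) for every polynomial f ∈ ℝ[X] and every j = 0,1,…,m (with the convention g_0 ≡ 1). -/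
open MeasureTheory MvPolynomial

/-- Membership in the quadratic module `Q(g)` generated by `g_1,…,g_m`:
`p = u_0 + Σ_j u_j g_j` with each `u_j` a sum of squares. -/
def memQuadraticModule {n m : ℕ} (g : Fin m → MvPolynomial (Fin n) ℝ)
    (p : MvPolynomial (Fin n) ℝ) : Prop :=
  ∃ (u₀ : MvPolynomial (Fin n) ℝ) (u : Fin m → MvPolynomial (Fin n) ℝ),
    IsSumSq u₀ ∧ (∀ j, IsSumSq (u j)) ∧ p = u₀ + ∑ j, u j * g j


open Set
open scoped ENNReal NNReal RealInnerProductSpace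

namespace LasserreAux

variable {n : ℕ}

lemma riesz_eq_sum_of_subset (y : (Fin n →₀ ℕ) → ℝ) (p : MvPolynomial (Fin n) ℝ)
    {s : Finset (Fin n →₀ ℕ)} (hs : p.support ⊆ s) :
    rieszFunctional y p = ∑ α ∈ s, p.coeff α * y α :=
  Finset.sum_subset hs (fun α _ hα => by
    simp [MvPolynomial.notMem_support_iff.mp hα])

lemma riesz_add (y : (Fin n →₀ ℕ) → ℝ) (p q : MvPolynomial (Fin n) ℝ) :
    rieszFunctional y (p + q) = rieszFunctional y p + rieszFunctional y q := by
  rw [riesz_eq_sum_of_subset y (p + q) (MvPolynomial.support_add),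
    riesz_eq_sum_of_subset y p Finset.subset_union_left,
    riesz_eq_sum_of_subset y q Finset.subset_union_right, ← Finset.sum_add_distrib]
  exact Finset.sum_congr rfl (fun α _ => by rw [MvPolynomial.coeff_add]; ring)

lemma riesz_smul (y : (Fin n →₀ ℕ) → ℝ) (c : ℝ) (p : MvPolynomial (Fin n) ℝ) :
    rieszFunctional y (c • p) = c * rieszFunctional y p := by
  rw [riesz_eq_sum_of_subset y (c • p) (MvPolynomial.support_smul), rieszFunctional,
    Finset.mul_sum]
  exact Finset.sum_congr rfl (fun α _ => by rw [MvPolynomial.coeff_smul]; simp; ring)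

lemma riesz_Cmul (y : (Fin n →₀ ℕ) → ℝ) (c : ℝ) (p : MvPolynomial (Fin n) ℝ) :
    rieszFunctional y (MvPolynomial.C c * p) = c * rieszFunctional y p := by
  rw [← MvPolynomial.smul_eq_C_mul, riesz_smul]

lemma riesz_monomial (y : (Fin n →₀ ℕ) → ℝ) (α : Fin n →₀ ℕ) :
    rieszFunctional y (MvPolynomial.monomial α (1:ℝ)) = y α := by
  rw [rieszFunctional, MvPolynomial.support_monomial]
  simp




variable {n : ℕ} {K : Set (Fin n → ℝ)}

lemma ae_memK {ρ : Measure (Fin n → ℝ)} (hρ : ρ Kᶜ = 0) : ∀ᵐ x ∂ρ, x ∈ K := by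
  rw [MeasureTheory.ae_iff]
  exact hρ

lemma integrable_poly (hK : IsCompact K) {ρ : Measure (Fin n → ℝ)} [IsFiniteMeasure ρ]
    (hρ : ρ Kᶜ = 0) {f : (Fin n → ℝ) → ℝ} (hf : Continuous f) : Integrable f ρ := by
  obtain ⟨Cb, hCb⟩ := hK.exists_bound_of_continuousOn hf.continuousOn
  refine ⟨hf.aestronglyMeasurable, HasFiniteIntegral.of_bounded (C := Cb) ?_⟩
  filter_upwards [ae_memK hρ] with x hx
  exact hCb x hx

lemma integrable_mul_poly (hK : IsCompact K) {ρ : Measure (Fin n → ℝ)} [IsFiniteMeasure ρ]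
    (hρ : ρ Kᶜ = 0) {G f : (Fin n → ℝ) → ℝ} (hG : Integrable G ρ) (hf : Continuous f) :
    Integrable (fun x => f x * G x) ρ := by
  obtain ⟨Cb, hCb⟩ := hK.exists_bound_of_continuousOn hf.continuousOn
  refine hG.bdd_mul (c := Cb) hf.aestronglyMeasurable ?_
  filter_upwards [ae_memK hρ] with x hx
  exact hCb x hx

lemma continuous_evalpoly (p : MvPolynomial (Fin n) ℝ) :
    Continuous (fun x : Fin n → ℝ => eval x p) := by
  continuity

lemma continuous_monomial (α : Fin n →₀ ℕ) :
    Continuous (fun x : Fin n → ℝ => ∏ i, x i ^ α i) := by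
  continuity

lemma riesz_eq_integral (hK : IsCompact K) {ρ : Measure (Fin n → ℝ)} [IsFiniteMeasure ρ]
    (hρ : ρ Kᶜ = 0) (w : (Fin n →₀ ℕ) → ℝ) (hw : ∀ α, w α = ∫ x, ∏ i, x i ^ α i ∂ρ)
    (p : MvPolynomial (Fin n) ℝ) :
    rieszFunctional w p = ∫ x, eval x p ∂ρ := by
  have h1 : (fun x : Fin n → ℝ => eval x p)
      = fun x => ∑ α ∈ p.support, p.coeff α * ∏ i, x i ^ α i := by
    funext x; exact MvPolynomial.eval_eq' x p
  rw [h1, integral_finset_sum _ (fun α _ =>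
    ((integrable_poly hK hρ (continuous_monomial α)).const_mul _))]
  rw [rieszFunctional]
  exact Finset.sum_congr rfl fun α _ => by
    rw [integral_const_mul, hw α]


lemma sq_le_of_quadratic {a b c : ℝ}
    (h : ∀ t : ℝ, 0 ≤ a + 2 * t * b + t ^ 2 * c) : b ^ 2 ≤ a * c := by
  have h' : ∀ t : ℝ, 0 ≤ c * (t * t) + (2 * b) * t + a := fun t => by nlinarith [h t]
  have := discrim_le_zero h'
  rw [discrim] at this
  nlinarith

variable {n : ℕ} {K : Set (Fin n → ℝ)}

lemma poly_dense (hK : IsCompact K) (u : (Fin n → ℝ) → ℝ) (hu : Continuous u)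
    {ε : ℝ} (hε : 0 < ε) :
    ∃ p : MvPolynomial (Fin n) ℝ, ∀ x ∈ K, |eval x p - u x| ≤ ε := by
  rcases K.eq_empty_or_nonempty with rfl | hne
  · exact ⟨0, by simp⟩
  haveI : CompactSpace K := isCompact_iff_compactSpace.mp hK
  set coord : Fin n → C(K, ℝ) := fun i => ⟨fun x => (x : Fin n → ℝ) i,
    (continuous_apply i).comp continuous_subtype_val⟩ with hcoord
  set Ψ : MvPolynomial (Fin n) ℝ →ₐ[ℝ] C(K, ℝ) := MvPolynomial.aeval coord with hΨ
  have hΨapp : ∀ (p : MvPolynomial (Fin n) ℝ) (x : K), Ψ p x = eval (x : Fin n → ℝ) p := by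
    intro p x
    induction p using MvPolynomial.induction_on with
    | C a => simp [hΨ]
    | add p q hp hq => simp [map_add, hp, hq]
    | mul_X p i hp => rw [map_mul, ContinuousMap.mul_apply, hp]; simp [hΨ, hcoord]
  set A : Subalgebra ℝ C(K, ℝ) := Ψ.range with hA
  have hsep : A.SeparatesPoints := by
    intro x y hxy
    have hex : ∃ i, (x : Fin n → ℝ) i ≠ (y : Fin n → ℝ) i := by
      by_contra hcon; push_neg at hcon; exact hxy (Subtype.ext (funext hcon))
    obtain ⟨i, hi⟩ := hex
    have hmem : coord i ∈ A := ⟨X i, by simp [hΨ]⟩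
    exact ⟨⇑(coord i), ⟨coord i, hmem, rfl⟩, by simpa [hcoord] using hi⟩
  have hAtop := ContinuousMap.subalgebra_topologicalClosure_eq_top_of_separatesPoints A hsep
  set uK : C(K, ℝ) := ⟨fun x => u x, hu.comp continuous_subtype_val⟩ with huK
  have humem : uK ∈ closure (A : Set C(K, ℝ)) := by
    have : uK ∈ A.topologicalClosure := by rw [hAtop]; trivial
    exact this
  rcases Metric.mem_closure_iff.mp humem ε hε with ⟨a, haA, hdist⟩
  obtain ⟨p, rfl⟩ := haA
  refine ⟨p, fun x hx => ?_⟩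
  have hd : dist (Ψ p ⟨x, hx⟩) (uK ⟨x, hx⟩) ≤ dist (Ψ p) uK :=
    ContinuousMap.dist_apply_le_dist _
  rw [hΨapp p ⟨x, hx⟩] at hd
  have : dist (eval x p) (u x) < ε := lt_of_le_of_lt hd (by rwa [dist_comm] at hdist)
  rw [Real.dist_eq] at this
  exact this.le


lemma hcont_of_poly_tests (hK : IsCompact K) {μ : Measure (Fin n → ℝ)} [IsFiniteMeasure μ]
    (hμK : μ Kᶜ = 0) {G : (Fin n → ℝ) → ℝ} (hG : Integrable G μ)
    (htest : ∀ p : MvPolynomial (Fin n) ℝ, 0 ≤ ∫ x, G x * (eval x p) ^ 2 ∂μ)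
    (φ : (Fin n → ℝ) → ℝ) (hφ : Continuous φ) (hφ01 : ∀ x, φ x ∈ Icc (0:ℝ) 1) :
    0 ≤ ∫ x, G x * φ x ∂μ := by
  have hM0 : (0:ℝ) ≤ ∫ x, |G x| ∂μ := integral_nonneg (fun x => abs_nonneg _)
  set M := ∫ x, |G x| ∂μ with hM
  have hint2 : Integrable (fun x => G x * φ x) μ := by
    have := hG.bdd_mul (c := 1) hφ.aestronglyMeasurable (ae_of_all _ fun x => by
      rw [Real.norm_eq_abs, abs_of_nonneg (hφ01 x).1]; exact (hφ01 x).2)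
    simpa [mul_comm] using this
  have key : ∀ ε : ℝ, 0 < ε → -(ε * (ε + 2) * M) ≤ ∫ x, G x * φ x ∂μ := by
    intro ε hε
    obtain ⟨p, hp⟩ := poly_dense hK (fun x => Real.sqrt (φ x))
      (Real.continuous_sqrt.comp hφ) hε
    have hpt : ∀ x ∈ K, |(eval x p) ^ 2 - φ x| ≤ ε * (ε + 2) := by
      intro x hx
      have h1 := hp x hx
      have h2 : Real.sqrt (φ x) ≤ 1 := by
        rw [show (1:ℝ) = Real.sqrt 1 by simp]
        exact Real.sqrt_le_sqrt (hφ01 x).2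
      have h3 : 0 ≤ Real.sqrt (φ x) := Real.sqrt_nonneg _
      have h4 : Real.sqrt (φ x) ^ 2 = φ x := Real.sq_sqrt (hφ01 x).1
      set a := eval x p with ha
      set s := Real.sqrt (φ x) with hs
      have hfac : a ^ 2 - φ x = (a - s) * (a + s) := by rw [← h4]; ring
      rw [hfac, abs_mul]
      have h5 : |a + s| ≤ ε + 2 := by
        have : |a + s| ≤ |a - s| + 2 * |s| := by
          have : a + s = (a - s) + 2 * s := by ring
          rw [this]
          calc |(a - s) + 2 * s| ≤ |a - s| + |2 * s| := abs_add_le _ _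
          _ = |a - s| + 2 * |s| := by rw [abs_mul]; norm_num
        have hsabs : |s| ≤ 1 := by rw [abs_of_nonneg h3]; exact h2
        linarith
      have h6 : 0 ≤ |a - s| := abs_nonneg _
      nlinarith
    have hint1 : Integrable (fun x => G x * (eval x p) ^ 2) μ := by
      have := integrable_mul_poly hK hμK hG
        ((continuous_evalpoly p).pow 2)
      simpa [mul_comm] using this
    have hdiff : |∫ x, G x * (eval x p) ^ 2 ∂μ - ∫ x, G x * φ x ∂μ| ≤ ε * (ε + 2) * M := by
      rw [← integral_sub hint1 hint2]
      have habs : |∫ x, (G x * (eval x p) ^ 2 - G x * φ x) ∂μ|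
          ≤ ∫ x, |G x * (eval x p) ^ 2 - G x * φ x| ∂μ := by
        simpa [Real.norm_eq_abs] using
          norm_integral_le_integral_norm (fun x => G x * (eval x p) ^ 2 - G x * φ x) (μ := μ)
      refine le_trans habs ?_
      have hmono : ∫ x, |G x * (eval x p) ^ 2 - G x * φ x| ∂μ
          ≤ ∫ x, ε * (ε + 2) * |G x| ∂μ := by
        refine integral_mono_ae (hint1.sub hint2).abs ((hG.abs).const_mul _) ?_
        filter_upwards [ae_memK hμK] with x hx
        have : G x * (eval x p) ^ 2 - G x * φ x = G x * ((eval x p) ^ 2 - φ x) := by ring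
        rw [this, abs_mul]
        calc |G x| * |(eval x p) ^ 2 - φ x| ≤ |G x| * (ε * (ε + 2)) :=
          mul_le_mul_of_nonneg_left (hpt x hx) (abs_nonneg _)
        _ = ε * (ε + 2) * |G x| := by ring
      refine le_trans hmono (le_of_eq ?_)
      rw [integral_const_mul]
    have := htest p
    have habs2 := (abs_le.mp hdiff).2
    linarith
  by_contra hneg
  push_neg at hneg
  set I := ∫ x, G x * φ x ∂μ with hI
  have hIneg : I < 0 := hneg
  have hMpos : (0:ℝ) < M + 1 := by linarith
  set ε := min 1 (-I / (3 * (M + 1))) with hε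
  have hεpos : 0 < ε := lt_min one_pos (div_pos (by linarith) (by linarith))
  have h1 : ε ≤ 1 := min_le_left _ _
  have h2 : ε ≤ -I / (3 * (M + 1)) := min_le_right _ _
  have hkey := key ε hεpos
  have hbound : ε * (ε + 2) * M ≤ 3 * ε * M := by nlinarith
  have hb2 : 3 * ε * M < -I := by
    have : 3 * ε * (M + 1) ≤ -I := by
      have := mul_le_mul_of_nonneg_left h2 (by positivity : (0:ℝ) ≤ 3 * (M + 1))
      calc 3 * ε * (M + 1) = 3 * (M + 1) * ε := by ring
      _ ≤ 3 * (M + 1) * (-I / (3 * (M + 1))) := by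
        exact mul_le_mul_of_nonneg_left h2 (by positivity)
      _ = -I := by
        rw [mul_comm, div_mul_cancel₀]
        exact ne_of_gt (by linarith)
    nlinarith
  linarith

lemma ae_nonneg_of_poly_tests (hK : IsCompact K) {μ : Measure (Fin n → ℝ)} [IsFiniteMeasure μ]
    (hμK : μ Kᶜ = 0) {G : (Fin n → ℝ) → ℝ} (hG : Integrable G μ)
    (htest : ∀ p : MvPolynomial (Fin n) ℝ, 0 ≤ ∫ x, G x * (eval x p) ^ 2 ∂μ) :
    0 ≤ᵐ[μ] G := by
  refine ae_nonneg_of_forall_setIntegral_nonneg hG (fun s hs _ => ?_)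
  have main : ∀ ε : ℝ, 0 < ε → -ε ≤ ∫ x in s, G x ∂μ := by
    intro ε hε
    obtain ⟨δ, hδpos, hδ⟩ := (memLp_one_iff_integrable.mpr hG).eLpNorm_indicator_le
      le_rfl ENNReal.one_ne_top hε
    set δ2 : ℝ≥0∞ := ENNReal.ofReal δ / 2 with hδ2
    have hδ2pos : δ2 ≠ 0 := by
      simp [hδ2, ENNReal.div_eq_zero_iff, ENNReal.ofReal_eq_zero, not_le, hδpos]
    have hsfin : μ s ≠ ⊤ := measure_ne_top μ s
    obtain ⟨Cc, hCs, hCclosed, hCmeas⟩ := hs.exists_isClosed_lt_add hsfin hδ2pos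
    obtain ⟨U, hsU, hUopen, hUmeas⟩ := Set.exists_isOpen_lt_add s hsfin hδ2pos
    have hCU : Cc ⊆ U := hCs.trans hsU
    -- measure of U \ Cc
    have hsub : U \ Cc ⊆ (U \ s) ∪ (s \ Cc) := by
      intro x hx
      by_cases hxs : x ∈ s
      · exact Or.inr ⟨hxs, hx.2⟩
      · exact Or.inl ⟨hx.1, hxs⟩
    have hUs : μ (U \ s) ≤ δ2 := by
      rw [measure_diff hsU hs.nullMeasurableSet hsfin]
      exact le_of_lt (ENNReal.sub_lt_of_lt_add (measure_mono hsU) (by rwa [add_comm] at hUmeas))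
    have hsC : μ (s \ Cc) ≤ δ2 := by
      rw [measure_diff hCs hCclosed.measurableSet.nullMeasurableSet (measure_ne_top μ Cc)]
      exact le_of_lt (ENNReal.sub_lt_of_lt_add (measure_mono hCs) (by rwa [add_comm] at hCmeas))
    have hUC : μ (U \ Cc) ≤ ENNReal.ofReal δ := by
      calc μ (U \ Cc) ≤ μ ((U \ s) ∪ (s \ Cc)) := measure_mono hsub
      _ ≤ μ (U \ s) + μ (s \ Cc) := measure_union_le _ _
      _ ≤ δ2 + δ2 := add_le_add hUs hsC
      _ = ENNReal.ofReal δ := ENNReal.add_halves _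
    -- Urysohn
    obtain ⟨f, hf0, hf1, hf01⟩ := exists_continuous_zero_one_of_isClosed
      (isClosed_compl_iff.mpr hUopen) hCclosed
      (disjoint_compl_left.mono_right (le_iff_subset.mpr hCU))
    have hf01' : ∀ x, (f : (Fin n → ℝ) → ℝ) x ∈ Icc (0:ℝ) 1 := fun x => hf01 x
    have hpos := hcont_of_poly_tests hK hμK hG htest f f.continuous hf01'
    -- the indicator bound
    have hintf : Integrable (fun x => G x * f x) μ := by
      have := hG.bdd_mul (c := 1) f.continuous.aestronglyMeasurable (ae_of_all _ fun x => by
        rw [Real.norm_eq_abs, abs_of_nonneg (hf01' x).1]; exact (hf01' x).2)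
      simpa [mul_comm] using this
    have hindint : Integrable (s.indicator G) μ := hG.indicator hs
    have hUCmeas : MeasurableSet (U \ Cc) := hUopen.measurableSet.diff hCclosed.measurableSet
    -- L1 bound on indicator of U \ Cc
    have htail : ∫ x, |(U \ Cc).indicator G x| ∂μ ≤ ε := by
      have h1 := hδ (U \ Cc) hUCmeas hUC
      have h2 : ENNReal.ofReal (∫ x, ‖(U \ Cc).indicator G x‖ ∂μ)
          = eLpNorm ((U \ Cc).indicator G) 1 μ := by
        rw [ofReal_integral_norm_eq_lintegral_enorm (hG.indicator hUCmeas),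
          eLpNorm_one_eq_lintegral_enorm]
      have h3 : ENNReal.ofReal (∫ x, ‖(U \ Cc).indicator G x‖ ∂μ) ≤ ENNReal.ofReal ε := by
        rw [h2]; exact h1
      have h4 := (ENNReal.ofReal_le_ofReal_iff hε.le).mp h3
      simpa [Real.norm_eq_abs] using h4
    have hptwise : ∀ x, |G x * f x - s.indicator G x| ≤ |(U \ Cc).indicator G x| := by
      intro x
      by_cases hxC : x ∈ Cc
      · have hxs : x ∈ s := hCs hxC
        have hxf : f x = 1 := hf1 hxC
        have hxUC : x ∉ U \ Cc := fun h => h.2 hxC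
        rw [Set.indicator_of_mem hxs, Set.indicator_of_notMem hxUC, hxf]
        simp
      · by_cases hxU : x ∈ U
        · have hxUC : x ∈ U \ Cc := ⟨hxU, hxC⟩
          rw [Set.indicator_of_mem hxUC]
          have hfx := hf01' x
          by_cases hxs : x ∈ s
          · rw [Set.indicator_of_mem hxs]
            have : G x * f x - G x = G x * (f x - 1) := by ring
            rw [this, abs_mul]
            have : |f x - 1| ≤ 1 := by
              rw [abs_le]
              exact ⟨by linarith [hfx.1], by linarith [hfx.2]⟩
            nlinarith [abs_nonneg (G x)]
          · rw [Set.indicator_of_notMem hxs, sub_zero, abs_mul]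
            have : |f x| ≤ 1 := by
              rw [abs_of_nonneg hfx.1]; exact hfx.2
            nlinarith [abs_nonneg (G x)]
        · have hxs : x ∉ s := fun h => hxU (hsU h)
          have hxf : f x = 0 := hf0 hxU
          have hxUC : x ∉ U \ Cc := fun h => hxU h.1
          rw [Set.indicator_of_notMem hxs, Set.indicator_of_notMem hxUC, hxf]
          simp
    have hdiff : |∫ x, G x * f x ∂μ - ∫ x in s, G x ∂μ| ≤ ε := by
      rw [← integral_indicator hs, ← integral_sub hintf hindint]
      have habs : |∫ x, (G x * f x - s.indicator G x) ∂μ|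
          ≤ ∫ x, |G x * f x - s.indicator G x| ∂μ := by
        simpa [Real.norm_eq_abs] using
          norm_integral_le_integral_norm (fun x => G x * f x - s.indicator G x) (μ := μ)
      refine le_trans habs (le_trans ?_ htail)
      exact integral_mono (hintf.sub hindint).abs (hG.indicator hUCmeas).abs hptwise
    have := (abs_le.mp hdiff).2
    linarith
  by_contra hneg
  push_neg at hneg
  have := main (-(∫ x in s, G x ∂μ) / 2) (by linarith)
  linarith

lemma exists_density (hK : IsCompact K) {μ : Measure (Fin n → ℝ)} [IsFiniteMeasure μ]
    (hμK : μ Kᶜ = 0) (y : (Fin n →₀ ℕ) → ℝ) {κ' : ℝ} (hκ' : 0 ≤ κ')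
    (hy0 : ∀ p : MvPolynomial (Fin n) ℝ, 0 ≤ rieszFunctional y (p ^ 2))
    (hyz : ∀ p : MvPolynomial (Fin n) ℝ,
      rieszFunctional y (p ^ 2) ≤ κ' * ∫ x, (eval x p) ^ 2 ∂μ) :
    ∃ H : (Fin n → ℝ) → ℝ, Integrable H μ ∧
      ∀ p : MvPolynomial (Fin n) ℝ, ∫ x, H x * eval x p ∂μ = rieszFunctional y p := by
  haveI : Fact ((1:ℝ≥0∞) ≤ 2) := ⟨by norm_num⟩
  -- expansion of the quadratic form
  have hexp : ∀ (p : MvPolynomial (Fin n) ℝ) (t : ℝ),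
      rieszFunctional y ((p + MvPolynomial.C t) ^ 2)
        = rieszFunctional y (p ^ 2) + 2 * t * rieszFunctional y p
          + t ^ 2 * rieszFunctional y 1 := by
    intro p t
    have hC2 : MvPolynomial.C (2 * t) = (2 : MvPolynomial (Fin n) ℝ) * MvPolynomial.C t := by
      rw [map_mul, map_ofNat]
    have hCsq : MvPolynomial.C (t ^ 2) = (MvPolynomial.C t : MvPolynomial (Fin n) ℝ) ^ 2 := by
      rw [map_pow]
    have hring : (p + MvPolynomial.C t) ^ 2
        = p ^ 2 + MvPolynomial.C (2 * t) * p + MvPolynomial.C (t ^ 2) * 1 := by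
      rw [hC2, hCsq]; ring
    rw [hring, riesz_add, riesz_add, riesz_Cmul, riesz_Cmul]
  have hy1 : 0 ≤ rieszFunctional y 1 := by
    have := hy0 1
    rwa [one_pow] at this
  -- Cauchy-Schwarz
  have hcs : ∀ p : MvPolynomial (Fin n) ℝ,
      (rieszFunctional y p) ^ 2 ≤ rieszFunctional y (p ^ 2) * rieszFunctional y 1 := by
    intro p
    refine sq_le_of_quadratic (fun t => ?_)
    rw [← hexp p t]
    exact hy0 (p + MvPolynomial.C t)
  have hnn : ∀ p : MvPolynomial (Fin n) ℝ, 0 ≤ ∫ x, (eval x p) ^ 2 ∂μ :=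
    fun p => integral_nonneg fun x => sq_nonneg _
  have key0 : ∀ p : MvPolynomial (Fin n) ℝ,
      (rieszFunctional y p) ^ 2 ≤ (κ' * rieszFunctional y 1) * ∫ x, (eval x p) ^ 2 ∂μ := by
    intro p
    calc (rieszFunctional y p) ^ 2 ≤ rieszFunctional y (p ^ 2) * rieszFunctional y 1 := hcs p
    _ ≤ (κ' * ∫ x, (eval x p) ^ 2 ∂μ) * rieszFunctional y 1 :=
      mul_le_mul_of_nonneg_right (hyz p) hy1
    _ = (κ' * rieszFunctional y 1) * ∫ x, (eval x p) ^ 2 ∂μ := by ring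
  -- membership in L²
  have hmem2 : ∀ p : MvPolynomial (Fin n) ℝ, MemLp (fun x => eval x p) 2 μ := by
    intro p
    obtain ⟨Cb, hCb⟩ := hK.exists_bound_of_continuousOn (continuous_evalpoly p).continuousOn
    exact MemLp.of_bound (continuous_evalpoly p).aestronglyMeasurable Cb
      (by filter_upwards [ae_memK hμK] with x hx using hCb x hx)
  set ι : MvPolynomial (Fin n) ℝ →ₗ[ℝ] Lp ℝ 2 μ :=
    { toFun := fun p => (hmem2 p).toLp _
      map_add' := fun p q => by
        show (hmem2 (p + q)).toLp _ = (hmem2 p).toLp _ + (hmem2 q).toLp _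
        rw [MemLp.toLp_congr (hmem2 (p + q)) ((hmem2 p).add (hmem2 q))
          (ae_of_all _ fun x => by simp), MemLp.toLp_add]
      map_smul' := fun c p => by
        show (hmem2 (c • p)).toLp _ = c • (hmem2 p).toLp _
        rw [MemLp.toLp_congr (hmem2 (c • p)) ((hmem2 p).const_smul c)
          (ae_of_all _ fun x => by simp [MvPolynomial.smul_eq_C_mul]),
          MemLp.toLp_const_smul] } with hι
  have hιcoe : ∀ p : MvPolynomial (Fin n) ℝ, (ι p : (Fin n → ℝ) → ℝ) =ᵐ[μ] fun x => eval x p :=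
    fun p => MemLp.coeFn_toLp (hmem2 p)
  have hιnorm : ∀ p : MvPolynomial (Fin n) ℝ, ‖ι p‖ ^ 2 = ∫ x, (eval x p) ^ 2 ∂μ := by
    intro p
    rw [← real_inner_self_eq_norm_sq]
    rw [MeasureTheory.L2.inner_def]
    refine integral_congr_ae ?_
    filter_upwards [hιcoe p] with x hx
    simp [hx, RCLike.inner_apply, sq]
  set c₀ : ℝ := Real.sqrt (κ' * rieszFunctional y 1) with hc₀
  have hbound : ∀ p : MvPolynomial (Fin n) ℝ, |rieszFunctional y p| ≤ c₀ * ‖ι p‖ := by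
    intro p
    have h1 : |rieszFunctional y p| = Real.sqrt ((rieszFunctional y p) ^ 2) :=
      (Real.sqrt_sq_eq_abs _).symm
    rw [h1, hc₀]
    have h2 := Real.sqrt_le_sqrt (key0 p)
    refine le_trans h2 (le_of_eq ?_)
    rw [Real.sqrt_mul (by positivity), ← hιnorm p, Real.sqrt_sq (norm_nonneg _)]
  -- linear map version of the Riesz functional
  set Lmap : MvPolynomial (Fin n) ℝ →ₗ[ℝ] ℝ :=
    { toFun := rieszFunctional y
      map_add' := riesz_add y
      map_smul' := fun c p => by
        show rieszFunctional y (c • p) = c • rieszFunctional y p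
        rw [riesz_smul, smul_eq_mul] } with hLmap
  have hker : LinearMap.ker ι ≤ LinearMap.ker Lmap := by
    intro p hp
    rw [LinearMap.mem_ker] at hp ⊢
    have := hbound p
    rw [hp, norm_zero, mul_zero] at this
    have habs : |rieszFunctional y p| = 0 := le_antisymm this (abs_nonneg _)
    simpa [hLmap] using abs_eq_zero.mp habs
  set φ0 : (LinearMap.range ι) →ₗ[ℝ] ℝ :=
    (Submodule.liftQ (LinearMap.ker ι) Lmap hker).comp
      (ι.quotKerEquivRange.symm.toLinearMap) with hφ0def
  have hφ0 : ∀ p : MvPolynomial (Fin n) ℝ,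
      φ0 ⟨ι p, LinearMap.mem_range_self ι p⟩ = rieszFunctional y p := by
    intro p
    have h1 : ι.quotKerEquivRange (Submodule.Quotient.mk p)
        = ⟨ι p, LinearMap.mem_range_self ι p⟩ := by
      apply Subtype.ext
      exact ι.quotKerEquivRange_apply_mk p
    have h2 : ι.quotKerEquivRange.symm ⟨ι p, LinearMap.mem_range_self ι p⟩
        = Submodule.Quotient.mk p := by
      rw [LinearEquiv.symm_apply_eq, h1]
    rw [hφ0def, LinearMap.comp_apply, LinearEquiv.coe_toLinearMap, h2, Submodule.liftQ_apply]
    rfl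
  have hφ0bound : ∀ v : LinearMap.range ι, ‖φ0 v‖ ≤ c₀ * ‖v‖ := by
    rintro ⟨v, hv⟩
    obtain ⟨p, rfl⟩ := hv
    rw [hφ0 p]
    rw [Real.norm_eq_abs]
    exact hbound p
  set φ : (LinearMap.range ι) →L[ℝ] ℝ := LinearMap.mkContinuous φ0 c₀ hφ0bound with hφdef
  obtain ⟨Φ, hΦext, -⟩ := exists_extension_norm_eq (LinearMap.range ι) φ
  set Hvec := (InnerProductSpace.toDual ℝ (Lp ℝ 2 μ)).symm Φ with hHvec
  have hinner : ∀ p : MvPolynomial (Fin n) ℝ, (inner ℝ Hvec (ι p) : ℝ) = rieszFunctional y p := by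
    intro p
    rw [hHvec, InnerProductSpace.toDual_symm_apply]
    have := hΦext ⟨ι p, LinearMap.mem_range_self ι p⟩
    rw [this, hφdef, LinearMap.mkContinuous_apply, hφ0 p]
  refine ⟨fun x => (Hvec : (Fin n → ℝ) → ℝ) x, ?_, ?_⟩
  · exact MemLp.integrable (by norm_num) (Lp.memLp Hvec)
  · intro p
    rw [← hinner p, MeasureTheory.L2.inner_def]
    refine integral_congr_ae ?_
    filter_upwards [hιcoe p] with x hx
    simp [hx, RCLike.inner_apply, mul_comm]

lemma integral_withDensity_ofReal {μ : Measure (Fin n → ℝ)} {h : (Fin n → ℝ) → ℝ}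
    (hmeas : Measurable h) (hnn : ∀ x, 0 ≤ h x) (g : (Fin n → ℝ) → ℝ) :
    ∫ x, g x ∂(μ.withDensity fun x => ENNReal.ofReal (h x)) = ∫ x, h x * g x ∂μ := by
  have h1 : (μ.withDensity fun x => ENNReal.ofReal (h x))
      = μ.withDensity fun x => ((h x).toNNReal : ℝ≥0∞) := rfl
  rw [h1, integral_withDensity_eq_integral_smul hmeas.real_toNNReal g]
  refine integral_congr_ae (ae_of_all _ fun x => ?_)
  show (h x).toNNReal • g x = h x * g x
  rw [NNReal.smul_def, smul_eq_mul, Real.coe_toNNReal _ (hnn x)]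

end LasserreAux

open LasserreAux

/-- **Theorem 3.1(b)** (Lasserre, "The moment problem with bounded density").
Let `K ⊂ ℝⁿ` be a compact basic semi-algebraic set `K = {x : g_j(x) ≥ 0}` such that
`N - ‖X‖² ∈ Q(g)` for some `N > 0`, let `μ` be a finite Borel measure on `K` with moment
sequence `z`, and let `y` be a real sequence.  Then `y` has a representing Borel measure
`ν` on `K` uniformly absolutely continuous with respect to `μ` if and only if there is a
scalar `κ` with `0 ≤ L_y(f² g_j) ≤ κ L_z(f² g_j)` for all polynomials `f` and all
`j = 0,1,…,m` (with `g_0 ≡ 1`). -/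
theorem moment_problem_bounded_density_compact_putinar
    {n m : ℕ} (g : Fin m → MvPolynomial (Fin n) ℝ)
    (K : Set (Fin n → ℝ))
    (hKdef : K = {x : Fin n → ℝ | ∀ j : Fin m, 0 ≤ eval x (g j)})
    (hK : IsCompact K)
    (N : ℝ) (hN : 0 < N)
    (harch : memQuadraticModule g (C N - ∑ i, (X i : MvPolynomial (Fin n) ℝ) ^ 2))
    (μ : Measure (Fin n → ℝ)) [IsFiniteMeasure μ] (hμK : μ Kᶜ = 0)
    (z : (Fin n →₀ ℕ) → ℝ)
    (hz : ∀ α : Fin n →₀ ℕ, z α = ∫ x, ∏ i, x i ^ α i ∂μ)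
    (y : (Fin n →₀ ℕ) → ℝ) :
    (∃ ν : Measure (Fin n → ℝ), ν Kᶜ = 0 ∧
        (∀ α : Fin n →₀ ℕ, y α = ∫ x, ∏ i, x i ^ α i ∂ν) ∧
        ∃ h : (Fin n → ℝ) → ℝ, Measurable h ∧
          ν = μ.withDensity (fun x => ENNReal.ofReal (h x)) ∧
          ∃ C : ℝ, ∀ᵐ x ∂μ, 0 ≤ h x ∧ h x ≤ C) ↔
    (∃ κ : ℝ,
      (∀ f : MvPolynomial (Fin n) ℝ,
        0 ≤ rieszFunctional y (f ^ 2) ∧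
        rieszFunctional y (f ^ 2) ≤ κ * rieszFunctional z (f ^ 2)) ∧
      (∀ (j : Fin m) (f : MvPolynomial (Fin n) ℝ),
        0 ≤ rieszFunctional y (f ^ 2 * g j) ∧
        rieszFunctional y (f ^ 2 * g j) ≤ κ * rieszFunctional z (f ^ 2 * g j))) := by
  have hrepz : ∀ p : MvPolynomial (Fin n) ℝ, rieszFunctional z p = ∫ x, eval x p ∂μ :=
    riesz_eq_integral hK hμK z hz
  constructor
  · -- forward direction
    rintro ⟨ν, hνK, hνmom, h, hmeas, hνdef, C, hC⟩
    set κ₀ := max C 0 with hκ₀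
    have hκ₀0 : (0:ℝ) ≤ κ₀ := le_max_right _ _
    set h' : (Fin n → ℝ) → ℝ := fun x => max (h x) 0 with hh'
    have hmeas' : Measurable h' := hmeas.max measurable_const
    have hnn' : ∀ x, 0 ≤ h' x := fun x => le_max_right _ _
    have hbd' : ∀ᵐ x ∂μ, h' x ≤ κ₀ := by
      filter_upwards [hC] with x hx
      exact max_le (le_trans hx.2 (le_max_left _ _)) hκ₀0
    have hνdef' : ν = μ.withDensity (fun x => ENNReal.ofReal (h' x)) := by
      rw [hνdef]
      congr 1
      funext x
      by_cases hx : 0 ≤ h x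
      · rw [hh']; simp [max_eq_left hx]
      · rw [hh', ENNReal.ofReal_of_nonpos (le_of_not_ge hx)]
        simp [max_eq_right (le_of_not_ge hx)]
    have hint' : Integrable h' μ :=
      ⟨hmeas'.aestronglyMeasurable, HasFiniteIntegral.of_bounded (C := κ₀) (by
        filter_upwards [hbd'] with x hx
        rw [Real.norm_eq_abs, abs_of_nonneg (hnn' x)]; exact hx)⟩
    haveI : IsFiniteMeasure ν := by
      constructor
      rw [hνdef']
      rw [withDensity_apply _ MeasurableSet.univ, Measure.restrict_univ]
      calc ∫⁻ x, ENNReal.ofReal (h' x) ∂μ ≤ ∫⁻ _, ENNReal.ofReal κ₀ ∂μ := by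
            refine lintegral_mono_ae ?_
            filter_upwards [hbd'] with x hx
            exact ENNReal.ofReal_le_ofReal hx
      _ = ENNReal.ofReal κ₀ * μ univ := by rw [lintegral_const]
      _ < ⊤ := ENNReal.mul_lt_top ENNReal.ofReal_lt_top (measure_lt_top μ _)
    have hrepy : ∀ p : MvPolynomial (Fin n) ℝ, rieszFunctional y p = ∫ x, eval x p ∂ν :=
      riesz_eq_integral hK hνK y hνmom
    have hmain : ∀ q : MvPolynomial (Fin n) ℝ, (∀ x ∈ K, 0 ≤ eval x q) →
        0 ≤ rieszFunctional y q ∧ rieszFunctional y q ≤ κ₀ * rieszFunctional z q := by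
      intro q hq
      have hae : ∀ᵐ x ∂ν, 0 ≤ eval x q := by
        filter_upwards [ae_memK hνK] with x hx using hq x hx
      have hpos : 0 ≤ rieszFunctional y q := by
        rw [hrepy q]
        exact integral_nonneg_of_ae hae
      refine ⟨hpos, ?_⟩
      rw [hrepy q, hνdef', integral_withDensity_ofReal hmeas' hnn', hrepz q]
      have hint1 : Integrable (fun x => h' x * eval x q) μ := by
        have := integrable_mul_poly hK hμK hint' (continuous_evalpoly q)
        simpa [mul_comm] using this
      have hint2 : Integrable (fun x => κ₀ * eval x q) μ :=
        (integrable_poly hK hμK (continuous_evalpoly q)).const_mul _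
      calc ∫ x, h' x * eval x q ∂μ ≤ ∫ x, κ₀ * eval x q ∂μ := by
            refine integral_mono_ae hint1 hint2 ?_
            filter_upwards [hbd', ae_memK hμK] with x hx1 hx2
            exact mul_le_mul_of_nonneg_right hx1 (hq x hx2)
      _ = κ₀ * ∫ x, eval x q ∂μ := integral_const_mul _ _
    refine ⟨κ₀, fun f => ?_, fun j f => ?_⟩
    · refine hmain (f ^ 2) (fun x _ => ?_)
      rw [map_pow]
      exact sq_nonneg _
    · refine hmain (f ^ 2 * g j) (fun x hx => ?_)
      rw [map_mul, map_pow]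
      have : 0 ≤ eval x (g j) := by
        rw [hKdef] at hx
        exact hx j
      exact mul_nonneg (sq_nonneg _) this
  · -- backward direction
    rintro ⟨κ, hall, -⟩
    set κ' := max κ 0 with hκ'
    have hκ'0 : (0:ℝ) ≤ κ' := le_max_right _ _
    have hevalsq : ∀ (p : MvPolynomial (Fin n) ℝ),
        rieszFunctional z (p ^ 2) = ∫ x, (eval x p) ^ 2 ∂μ := by
      intro p
      rw [hrepz]
      exact integral_congr_ae (ae_of_all _ fun x => by simp)
    have hy0 : ∀ p : MvPolynomial (Fin n) ℝ, 0 ≤ rieszFunctional y (p ^ 2) :=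
      fun p => (hall p).1
    have hyz : ∀ p : MvPolynomial (Fin n) ℝ,
        rieszFunctional y (p ^ 2) ≤ κ' * ∫ x, (eval x p) ^ 2 ∂μ := by
      intro p
      have h2 := (hall p).2
      rw [hevalsq p] at h2
      refine le_trans h2 (mul_le_mul_of_nonneg_right (le_max_left _ _) ?_)
      exact integral_nonneg fun x => sq_nonneg _
    obtain ⟨H, hHint, hHrep⟩ := exists_density hK hμK y hκ'0 hy0 hyz
    have hHsq : ∀ p : MvPolynomial (Fin n) ℝ,
        ∫ x, H x * (eval x p) ^ 2 ∂μ = rieszFunctional y (p ^ 2) := by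
      intro p
      rw [← hHrep (p ^ 2)]
      exact integral_congr_ae (ae_of_all _ fun x => by simp)
    have htest1 : ∀ p : MvPolynomial (Fin n) ℝ, 0 ≤ ∫ x, H x * (eval x p) ^ 2 ∂μ := by
      intro p
      rw [hHsq p]
      exact hy0 p
    have hHae : 0 ≤ᵐ[μ] H := ae_nonneg_of_poly_tests hK hμK hHint htest1
    have hint2 : Integrable (fun x => κ' - H x) μ := (integrable_const κ').sub hHint
    have htest2 : ∀ p : MvPolynomial (Fin n) ℝ,
        0 ≤ ∫ x, (κ' - H x) * (eval x p) ^ 2 ∂μ := by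
      intro p
      have hintH : Integrable (fun x => H x * (eval x p) ^ 2) μ := by
        have := integrable_mul_poly hK hμK hHint
          ((continuous_evalpoly p).pow 2)
        simpa [mul_comm] using this
      have hintc : Integrable (fun x => κ' * (eval x p) ^ 2) μ :=
        (integrable_poly hK hμK
          ((continuous_evalpoly p).pow 2)).const_mul _
      have heq : ∫ x, (κ' - H x) * (eval x p) ^ 2 ∂μ
          = ∫ x, κ' * (eval x p) ^ 2 ∂μ - ∫ x, H x * (eval x p) ^ 2 ∂μ := by
        rw [← integral_sub hintc hintH]
        exact integral_congr_ae (ae_of_all _ fun x => by ring)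
      rw [heq, hHsq p, integral_const_mul]
      have := hyz p
      linarith
    have hH2 : 0 ≤ᵐ[μ] fun x => κ' - H x :=
      ae_nonneg_of_poly_tests hK hμK hint2 htest2
    -- measurable clamped version
    have hsm : AEStronglyMeasurable H μ := hHint.1
    set h₀ : (Fin n → ℝ) → ℝ := hsm.mk H with hh₀
    have heqae : H =ᵐ[μ] h₀ := hsm.ae_eq_mk
    set h : (Fin n → ℝ) → ℝ := fun x => max 0 (min (h₀ x) κ') with hh
    have hmeas : Measurable h :=
      measurable_const.max ((hsm.measurable_mk).min measurable_const)
    have hheq : h =ᵐ[μ] H := by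
      filter_upwards [heqae, hHae, hH2] with x hx1 hx2 hx3
      simp only [Pi.zero_apply] at hx2
      have hx3' : H x ≤ κ' := by simpa using hx3
      rw [hh]
      simp only [← hx1]
      rw [min_eq_left hx3', max_eq_right hx2]
    have hnn : ∀ x, 0 ≤ h x := fun x => le_max_left _ _
    have hbd : ∀ x, h x ≤ κ' := fun x => max_le hκ'0 (min_le_right _ _)
    refine ⟨μ.withDensity (fun x => ENNReal.ofReal (h x)), ?_, ?_, h, hmeas, rfl, κ',
      ae_of_all _ fun x => ⟨hnn x, hbd x⟩⟩
    · rw [withDensity_apply _ hK.isClosed.measurableSet.compl,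
        Measure.restrict_eq_zero.mpr hμK, lintegral_zero_measure]
    · intro α
      have hmono : ∀ x : Fin n → ℝ, eval x (MvPolynomial.monomial α (1:ℝ))
          = ∏ i, x i ^ α i := by
        intro x
        rw [MvPolynomial.eval_monomial]
        rw [one_mul]
        exact Finsupp.prod_pow α _
      rw [integral_withDensity_ofReal hmeas hnn]
      have h1 : ∫ x, h x * ∏ i, x i ^ α i ∂μ = ∫ x, H x * ∏ i, x i ^ α i ∂μ := by
        refine integral_congr_ae ?_
        filter_upwards [hheq] with x hx
        rw [hx]
      rw [h1]
      have h2 := hHrep (MvPolynomial.monomial α 1)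
      rw [riesz_monomial] at h2
      rw [← h2]
      exact (integral_congr_ae (ae_of_all _ fun x => by rw [hmono x])).symm
end

section
/- Let K ⊂ ℝⁿ be a compact basic semi-algebraic set K = {x ∈ ℝⁿ : g_j(x) ≥ 0, j = 1,…,m} with N − ‖X‖² ∈ Q(g) for some N > 0, let μ be a finite Borel measure on K with moment sequence z = (z_α), and let y = (y_α) be a real sequence. If there exists a scalar κ such that 0 ≤ L_y(f² g_j) ≤ κ L_z(f² g_j) for every polynomial f ∈ ℝ[X] and every j = 0,1,…,m (with g_0 ≡ 1), then y has a representing Borel measure ν on K with ν ≪ μ and Radon–Nikodym derivative h satisfying 0 ≤ h ≤ κ μ-almost everywhere. -/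
open MeasureTheory MvPolynomial

set_option maxHeartbeats 1000000

lemma clamp_abs_le (v t : ℝ) (h0 : 0 ≤ v) (h1 : v ≤ 1) :
    |v - max 0 (min t 1)| ≤ |v - t| := by
  rcases le_total t 0 with h|h
  · rw [min_eq_left (h.trans zero_le_one), max_eq_left h, sub_zero,
      abs_of_nonneg h0, abs_of_nonneg (by linarith)]
    linarith
  · rcases le_total 1 t with h'|h'
    · rw [min_eq_right h', max_eq_right zero_le_one,
        abs_of_nonpos (by linarith), abs_of_nonpos (by linarith)]
      linarith
    · rw [min_eq_left h', max_eq_right h]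

noncomputable def rieszLin {n : ℕ} (y : (Fin n →₀ ℕ) → ℝ) : MvPolynomial (Fin n) ℝ →ₗ[ℝ] ℝ :=
  (Finsupp.linearCombination ℝ y).comp
    (AddMonoidAlgebra.coeffLinearEquiv ℝ : AddMonoidAlgebra ℝ (Fin n →₀ ℕ) ≃ₗ[ℝ] _).toLinearMap

lemma riesz_eq_lc {n : ℕ} (y : (Fin n →₀ ℕ) → ℝ) (f : MvPolynomial (Fin n) ℝ) :
    rieszFunctional y f = rieszLin y f := rfl

lemma riesz_monomial {n : ℕ} (y : (Fin n →₀ ℕ) → ℝ) (α : Fin n →₀ ℕ) :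
    rieszFunctional y (monomial α 1) = y α := by
  simp [rieszFunctional, support_monomial, coeff_monomial]

-- MemLp of continuous functions for measures supported on a compact set

lemma memLp_of_continuous {n : ℕ} {K : Set (Fin n → ℝ)} (hK : IsCompact K)
    (μ : Measure (Fin n → ℝ)) [IsFiniteMeasure μ] (hμK : μ Kᶜ = 0)
    {F : (Fin n → ℝ) → ℝ} (hF : Continuous F) (p : ENNReal) : MemLp F p μ := by
  obtain ⟨C, hC⟩ := hK.exists_bound_of_continuousOn hF.continuousOn
  have hae : ∀ᵐ x ∂μ, x ∈ K := by
    rw [ae_iff]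
    exact hμK
  exact MemLp.of_bound hF.aestronglyMeasurable C (hae.mono fun x hx => hC x hx)

lemma integrable_of_continuous {n : ℕ} {K : Set (Fin n → ℝ)} (hK : IsCompact K)
    (μ : Measure (Fin n → ℝ)) [IsFiniteMeasure μ] (hμK : μ Kᶜ = 0)
    {F : (Fin n → ℝ) → ℝ} (hF : Continuous F) : Integrable F μ :=
  memLp_one_iff_integrable.mp (memLp_of_continuous hK μ hμK hF 1)

-- the Riesz functional of the moment sequence is the integral

lemma riesz_moment_eq_integral {n : ℕ} {K : Set (Fin n → ℝ)} (hK : IsCompact K)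
    (μ : Measure (Fin n → ℝ)) [IsFiniteMeasure μ] (hμK : μ Kᶜ = 0)
    (z : (Fin n →₀ ℕ) → ℝ)
    (hz : ∀ α : Fin n →₀ ℕ, z α = ∫ x, ∏ i, x i ^ α i ∂μ)
    (p : MvPolynomial (Fin n) ℝ) :
    rieszFunctional z p = ∫ x, eval x p ∂μ := by
  have hint : ∀ α : Fin n →₀ ℕ, Integrable (fun x : Fin n → ℝ => ∏ i, x i ^ α i) μ := by
    intro α
    exact integrable_of_continuous hK μ hμK (by continuity)
  calc rieszFunctional z p = ∑ α ∈ p.support, ∫ x, p.coeff α * ∏ i, x i ^ α i ∂μ := by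
        unfold rieszFunctional
        refine Finset.sum_congr rfl fun α _ => ?_
        rw [hz α, ← integral_const_mul]
    _ = ∫ x, ∑ α ∈ p.support, p.coeff α * ∏ i, x i ^ α i ∂μ := by
        rw [integral_finset_sum]
        intro α _
        exact (hint α).const_mul _
    _ = ∫ x, eval x p ∂μ := by
        refine integral_congr_ae (Filter.Eventually.of_forall fun x => ?_)
        exact (eval_eq' x p).symm

lemma exists_poly_near {n : ℕ} {K : Set (Fin n → ℝ)} (hK : IsCompact K)
    {ψ : (Fin n → ℝ) → ℝ} (hψ : Continuous ψ) {ε : ℝ} (hε : 0 < ε) :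
    ∃ p : MvPolynomial (Fin n) ℝ, ∀ x ∈ K, |eval x p - ψ x| < ε := by
  haveI : CompactSpace K := isCompact_iff_compactSpace.mp hK
  let coords : Fin n → C(K, ℝ) := fun i =>
    ⟨fun x => (x : Fin n → ℝ) i, (continuous_apply i).comp continuous_subtype_val⟩
  let Ψ : MvPolynomial (Fin n) ℝ →ₐ[ℝ] C(K, ℝ) := MvPolynomial.aeval coords
  have hΨeval : ∀ (p : MvPolynomial (Fin n) ℝ) (x : K), Ψ p x = eval (x : Fin n → ℝ) p := by
    intro p
    induction p using MvPolynomial.induction_on with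
    | C a => intro x; simp [Ψ]
    | add p q hp hq => intro x; simp [map_add, hp x, hq x]
    | mul_X p i hp => intro x; simp [map_mul, hp x, Ψ, coords]
  have hsep : (Ψ.range : Subalgebra ℝ C(K, ℝ)).SeparatesPoints := by
    intro x y hxy
    have : ∃ i, (x : Fin n → ℝ) i ≠ (y : Fin n → ℝ) i := by
      by_contra hc
      push_neg at hc
      exact hxy (Subtype.ext (funext hc))
    obtain ⟨i, hi⟩ := this
    refine ⟨Ψ (X i), ⟨Ψ (X i), ⟨X i, rfl⟩, rfl⟩, ?_⟩
    simpa [hΨeval] using hi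
  obtain ⟨⟨g, hgmem⟩, hg⟩ :=
    ContinuousMap.exists_mem_subalgebra_near_continuous_of_separatesPoints Ψ.range hsep
      (fun x : K => ψ x) (hψ.comp continuous_subtype_val) ε hε
  obtain ⟨p, hp⟩ := hgmem
  refine ⟨p, fun x hx => ?_⟩
  have := hg ⟨x, hx⟩
  simpa [hp ▸ hΨeval p ⟨x, hx⟩, Real.norm_eq_abs] using this

lemma cont_mul_integrable {n : ℕ} {K : Set (Fin n → ℝ)} (hK : IsCompact K)
    {μ : Measure (Fin n → ℝ)} (hμK : μ Kᶜ = 0)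
    {w : (Fin n → ℝ) → ℝ} (hwi : Integrable w μ)
    {g : (Fin n → ℝ) → ℝ} (hg : Continuous g) :
    Integrable (fun x => g x * w x) μ := by
  obtain ⟨C, hC⟩ := hK.exists_bound_of_continuousOn hg.continuousOn
  have hae : ∀ᵐ x ∂μ, x ∈ K := by rw [ae_iff]; exact hμK
  exact hwi.bdd_mul hg.aestronglyMeasurable (hae.mono fun x hx => hC x hx)

-- Step A1

lemma integral_contsq_mul_nonneg {n : ℕ} {K : Set (Fin n → ℝ)} (hK : IsCompact K)
    {μ : Measure (Fin n → ℝ)} [IsFiniteMeasure μ] (hμK : μ Kᶜ = 0)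
    {w : (Fin n → ℝ) → ℝ} (hwi : Integrable w μ)
    (hpos : ∀ f : MvPolynomial (Fin n) ℝ, 0 ≤ ∫ x, (eval x f)^2 * w x ∂μ)
    {ψ : (Fin n → ℝ) → ℝ} (hψ : Continuous ψ) :
    0 ≤ ∫ x, (ψ x)^2 * w x ∂μ := by
  have hae : ∀ᵐ x ∂μ, x ∈ K := by rw [ae_iff]; exact hμK
  obtain ⟨M, hM⟩ := hK.exists_bound_of_continuousOn hψ.continuousOn
  set M' : ℝ := max M 0 with hM'def
  have hM'0 : 0 ≤ M' := le_max_right _ _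
  have hM' : ∀ x ∈ K, |ψ x| ≤ M' := fun x hx => le_trans (hM x hx) (le_max_left _ _)
  set Iw : ℝ := ∫ x, |w x| ∂μ with hIwdef
  have hIw0 : 0 ≤ Iw := integral_nonneg fun x => abs_nonneg _
  refine le_of_forall_pos_le_add ?_
  intro ε hε
  set δ : ℝ := min 1 (ε / ((1 + 2 * M') * (1 + Iw))) with hδdef
  have hδpos : 0 < δ := lt_min one_pos (by positivity)
  have hδ1 : δ ≤ 1 := min_le_left _ _
  have hδε : δ * ((1 + 2 * M') * (1 + Iw)) ≤ ε := by
    rw [← le_div_iff₀ (by positivity)]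
    exact min_le_right _ _
  obtain ⟨p, hp⟩ := exists_poly_near hK hψ hδpos
  have hpc : Continuous fun x : Fin n → ℝ => eval x p := MvPolynomial.continuous_eval p
  have hint1 : Integrable (fun x => (eval x p)^2 * w x) μ :=
    cont_mul_integrable hK hμK hwi (hpc.pow 2)
  have hint2 : Integrable (fun x => ((ψ x)^2 - (eval x p)^2) * w x) μ :=
    cont_mul_integrable hK hμK hwi ((hψ.pow 2).sub (hpc.pow 2))
  have hsplit : ∫ x, (ψ x)^2 * w x ∂μ
      = (∫ x, (eval x p)^2 * w x ∂μ) + ∫ x, ((ψ x)^2 - (eval x p)^2) * w x ∂μ := by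
    rw [← integral_add hint1 hint2]
    congr 1; funext x; ring
  have hbnd : |∫ x, ((ψ x)^2 - (eval x p)^2) * w x ∂μ| ≤ δ * (δ + 2 * M') * Iw := by
    calc |∫ x, ((ψ x)^2 - (eval x p)^2) * w x ∂μ|
        ≤ ∫ x, |((ψ x)^2 - (eval x p)^2) * w x| ∂μ := by
          have := norm_integral_le_integral_norm
            (fun x => ((ψ x)^2 - (eval x p)^2) * w x) (μ := μ)
          simp only [Real.norm_eq_abs] at this
          exact this
      _ ≤ ∫ x, δ * (δ + 2 * M') * |w x| ∂μ := by
          refine integral_mono_ae hint2.abs (hwi.abs.const_mul _) ?_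
          refine hae.mono fun x hx => ?_
          have h1 : |eval x p - ψ x| ≤ δ := (hp x hx).le
          have h2 : |ψ x| ≤ M' := hM' x hx
          show |(ψ x ^ 2 - eval x p ^ 2) * w x| ≤ δ * (δ + 2 * M') * |w x|
          rw [abs_mul]
          refine mul_le_mul_of_nonneg_right ?_ (abs_nonneg _)
          have : (ψ x)^2 - (eval x p)^2 = -((eval x p - ψ x) * (eval x p + ψ x)) := by ring
          rw [this, abs_neg, abs_mul]
          have h3 : |eval x p + ψ x| ≤ δ + 2 * M' := by
            have := abs_sub_abs_le_abs_sub (eval x p) (ψ x)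
            have h4 : |eval x p + ψ x| ≤ |eval x p - ψ x| + 2 * |ψ x| := by
              have : eval x p + ψ x = (eval x p - ψ x) + 2 * ψ x := by ring
              rw [this]
              calc |eval x p - ψ x + 2 * ψ x| ≤ |eval x p - ψ x| + |2 * ψ x| := abs_add_le _ _
                _ = |eval x p - ψ x| + 2 * |ψ x| := by rw [abs_mul]; norm_num
            linarith
          exact mul_le_mul h1 h3 (abs_nonneg _) hδpos.le
      _ = δ * (δ + 2 * M') * Iw := by rw [integral_const_mul]
  have h0 : 0 ≤ ∫ x, (eval x p)^2 * w x ∂μ := hpos p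
  have hfin : δ * (δ + 2 * M') * Iw ≤ ε := by
    have t1 : δ * (δ + 2 * M') * Iw ≤ δ * (1 + 2 * M') * Iw := by
      nlinarith [mul_nonneg (mul_nonneg hδpos.le hIw0) (sub_nonneg.mpr hδ1)]
    have t2 : δ * (1 + 2 * M') * Iw ≤ δ * ((1 + 2 * M') * (1 + Iw)) := by
      nlinarith [mul_nonneg hδpos.le (by linarith : (0:ℝ) ≤ 1 + 2 * M')]
    linarith
  have := abs_le.mp hbnd
  linarith [hsplit, this.1]

lemma ae_nonneg_of_poly_tests {n : ℕ} {K : Set (Fin n → ℝ)} (hK : IsCompact K)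
    {μ : Measure (Fin n → ℝ)} [IsFiniteMeasure μ] (hμK : μ Kᶜ = 0)
    {w : (Fin n → ℝ) → ℝ} (hw : MemLp w 2 μ)
    (hpos : ∀ f : MvPolynomial (Fin n) ℝ, 0 ≤ ∫ x, (eval x f)^2 * w x ∂μ) :
    0 ≤ᵐ[μ] w := by
  have hwi : Integrable w μ :=
    memLp_one_iff_integrable.mp (hw.mono_exponent (by norm_num))
  refine ae_nonneg_of_forall_setIntegral_nonneg hwi fun s hs _ => ?_
  set Nw : ℝ := ‖hw.toLp w‖ with hNwdef
  have hNw0 : 0 ≤ Nw := norm_nonneg _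
  refine le_of_forall_pos_le_add ?_
  intro ε hε
  set ε' : ℝ := ε / (1 + Nw) with hε'def
  have hε'pos : 0 < ε' := by positivity
  set ind : (Fin n → ℝ) → ℝ := s.indicator fun _ => 1 with hinddef
  have hind01 : ∀ x, ind x = 0 ∨ ind x = 1 := by
    intro x; by_cases hx : x ∈ s <;> simp [hinddef, hx]
  have hindmem : MemLp ind 2 μ := by
    refine MemLp.of_bound ((stronglyMeasurable_const.indicator hs).aestronglyMeasurable) 1
      (ae_of_all _ fun x => ?_)
    rcases hind01 x with h | h <;> rw [h] <;> norm_num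
  obtain ⟨b, hb, -⟩ := hindmem.exists_boundedContinuous_eLpNorm_sub_le
    (by norm_num : (2 : ENNReal) ≠ ⊤) (ε := ENNReal.ofReal ε') (ENNReal.ofReal_pos.mpr hε'pos).ne'
  set ψ : (Fin n → ℝ) → ℝ := fun x => max 0 (min (b x) 1) with hψdef
  have hψc : Continuous ψ := continuous_const.max (b.continuous.min continuous_const)
  have hψ01 : ∀ x, 0 ≤ ψ x ∧ ψ x ≤ 1 := by
    intro x
    refine ⟨le_max_left _ _, max_le ?_ (min_le_right _ _)⟩
    norm_num
  have hclamp : ∀ x, |ind x - ψ x| ≤ |ind x - b x| := by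
    intro x
    rcases hind01 x with h | h <;> rw [h] <;>
      exact clamp_abs_le _ _ (by norm_num) (by norm_num)
  have hψ2 : eLpNorm (fun x => ind x - ψ x) 2 μ ≤ ENNReal.ofReal ε' := by
    refine le_trans (eLpNorm_mono fun x => ?_) hb
    simpa [Real.norm_eq_abs] using hclamp x
  have hψmem : MemLp ψ 2 μ := by
    refine MemLp.of_bound hψc.aestronglyMeasurable 1 (ae_of_all _ fun x => ?_)
    rw [Real.norm_eq_abs, abs_of_nonneg (hψ01 x).1]
    exact (hψ01 x).2
  have hdiffmem : MemLp (fun x => ind x - ψ x) 2 μ := hindmem.sub hψmem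
  -- pairing bound
  have hpair : |∫ x, (ind x - ψ x) * w x ∂μ| ≤ ε' * Nw := by
    have hiprod : ∫ x, (ind x - ψ x) * w x ∂μ
        = inner ℝ (hdiffmem.toLp _) (hw.toLp w) := by
      rw [L2.inner_def]
      refine integral_congr_ae ?_
      filter_upwards [hdiffmem.coeFn_toLp, hw.coeFn_toLp] with x h1 h2
      rw [h1, h2]
      simp [RCLike.inner_apply, mul_comm]
    rw [hiprod]
    calc |inner ℝ (hdiffmem.toLp _) (hw.toLp w : Lp ℝ 2 μ)|
        ≤ ‖hdiffmem.toLp _‖ * ‖hw.toLp w‖ := abs_real_inner_le_norm _ _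
      _ ≤ ε' * Nw := by
          refine mul_le_mul_of_nonneg_right ?_ hNw0
          rw [Lp.norm_toLp]
          exact ENNReal.toReal_le_of_le_ofReal hε'pos.le hψ2
  -- integrabilities
  have hwint_ind : Integrable (fun x => ind x * w x) μ := by
    refine hwi.bdd_mul (c := 1) ((stronglyMeasurable_const.indicator hs).aestronglyMeasurable)
      (ae_of_all _ fun x => ?_)
    rcases hind01 x with h | h <;> rw [h] <;> norm_num
  have hwint_ψ : Integrable (fun x => ψ x * w x) μ := cont_mul_integrable hK hμK hwi hψc
  have hwint_diff : Integrable (fun x => (ind x - ψ x) * w x) μ := by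
    have : (fun x => (ind x - ψ x) * w x) = fun x => ind x * w x - ψ x * w x := by
      funext x; ring
    rw [this]
    exact hwint_ind.sub hwint_ψ
  -- positivity of ∫ ψ w
  have hψw : 0 ≤ ∫ x, ψ x * w x ∂μ := by
    have : ∫ x, ψ x * w x ∂μ = ∫ x, (Real.sqrt (ψ x))^2 * w x ∂μ := by
      refine integral_congr_ae (ae_of_all _ fun x => ?_)
      show ψ x * w x = Real.sqrt (ψ x) ^ 2 * w x
      rw [Real.sq_sqrt (hψ01 x).1]
    rw [this]
    exact integral_contsq_mul_nonneg hK hμK hwi hpos (Real.continuous_sqrt.comp hψc)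
  -- assemble
  have hseteq : ∫ x in s, w x ∂μ = ∫ x, ind x * w x ∂μ := by
    rw [← integral_indicator hs]
    refine integral_congr_ae (ae_of_all _ fun x => ?_)
    by_cases hx : x ∈ s <;> simp [hinddef, Set.indicator_apply, hx]
  have hsplit : ∫ x, ind x * w x ∂μ
      = (∫ x, ψ x * w x ∂μ) + ∫ x, (ind x - ψ x) * w x ∂μ := by
    rw [← integral_add hwint_ψ hwint_diff]
    congr 1; funext x; ring
  have hfin : ε' * Nw ≤ ε := by
    rw [hε'def]
    rw [div_mul_eq_mul_div, div_le_iff₀ (by positivity)]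
    nlinarith
  have := abs_le.mp hpair
  rw [hseteq, hsplit]
  linarith [this.1]

/-- ("If" part of Theorem 3.1(b), Lasserre.)
Let `K ⊂ ℝⁿ` be a compact basic semi-algebraic set `K = {x : g_j(x) ≥ 0}` with
`N - ‖X‖² ∈ Q(g)` for some `N > 0`, let `μ` be a finite Borel measure on `K` with moment
sequence `z`, and let `y` be a real sequence.  If there is a scalar `κ` with
`0 ≤ L_y(f² g_j) ≤ κ L_z(f² g_j)` for all polynomials `f` and all `j = 0,1,…,m`
(with `g_0 ≡ 1`), then `y` has a representing Borel measure `ν` on `K` with `ν ≪ μ` and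
Radon–Nikodym density `h` satisfying `0 ≤ h ≤ κ` `μ`-a.e. -/
theorem representing_bounded_density_of_moment_ineq_putinar
    {n m : ℕ} (g : Fin m → MvPolynomial (Fin n) ℝ)
    (K : Set (Fin n → ℝ))
    (hKdef : K = {x : Fin n → ℝ | ∀ j : Fin m, 0 ≤ eval x (g j)})
    (hK : IsCompact K)
    (N : ℝ) (hN : 0 < N)
    (harch : memQuadraticModule g (C N - ∑ i, (X i : MvPolynomial (Fin n) ℝ) ^ 2))
    (μ : Measure (Fin n → ℝ)) [IsFiniteMeasure μ] (hμK : μ Kᶜ = 0)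
    (z : (Fin n →₀ ℕ) → ℝ)
    (hz : ∀ α : Fin n →₀ ℕ, z α = ∫ x, ∏ i, x i ^ α i ∂μ)
    (y : (Fin n →₀ ℕ) → ℝ) (κ : ℝ)
    (hy0 : ∀ f : MvPolynomial (Fin n) ℝ,
        0 ≤ rieszFunctional y (f ^ 2) ∧
        rieszFunctional y (f ^ 2) ≤ κ * rieszFunctional z (f ^ 2))
    (hyj : ∀ (j : Fin m) (f : MvPolynomial (Fin n) ℝ),
        0 ≤ rieszFunctional y (f ^ 2 * g j) ∧
        rieszFunctional y (f ^ 2 * g j) ≤ κ * rieszFunctional z (f ^ 2 * g j)) :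
    ∃ ν : Measure (Fin n → ℝ), ν Kᶜ = 0 ∧
      (∀ α : Fin n →₀ ℕ, y α = ∫ x, ∏ i, x i ^ α i ∂ν) ∧ ν ≪ μ ∧
      ∃ h : (Fin n → ℝ) → ℝ, Measurable h ∧
        ν = μ.withDensity (fun x => ENNReal.ofReal (h x)) ∧
        ∀ᵐ x ∂μ, 0 ≤ h x ∧ h x ≤ κ := by
  by_cases hμ0 : μ = 0
  · -- degenerate case: μ = 0 forces y = 0
    subst hμ0
    have hz0 : ∀ p : MvPolynomial (Fin n) ℝ, rieszFunctional z p = 0 := by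
      intro p
      unfold rieszFunctional
      have : ∀ α : Fin n →₀ ℕ, z α = 0 := fun α => by rw [hz]; simp
      simp [this]
    have hsq : ∀ f : MvPolynomial (Fin n) ℝ, rieszFunctional y (f ^ 2) = 0 := by
      intro f
      have h1 := (hy0 f).1
      have h2 := (hy0 f).2
      rw [hz0, mul_zero] at h2
      linarith
    have hy_zero : ∀ α : Fin n →₀ ℕ, y α = 0 := by
      intro α
      set mα : MvPolynomial (Fin n) ℝ := monomial α 1 with hmα
      have hexp : (mα + 1) ^ 2 = mα ^ 2 + (2:ℝ) • mα + 1 := by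
        rw [smul_eq_C_mul, map_ofNat]; ring
      have h1 := hsq (mα + 1)
      have h2 := hsq mα
      have h3 := hsq 1
      rw [one_pow] at h3
      rw [riesz_eq_lc, hexp, map_add, map_add, _root_.map_smul] at h1
      rw [riesz_eq_lc] at h2 h3
      have hm : rieszLin y mα = y α := by
        rw [← riesz_eq_lc, hmα, riesz_monomial]
      rw [hm, h2, h3, smul_eq_mul] at h1
      linarith
    refine ⟨0, by simp, ?_, ?_, 0, measurable_const, ?_, ?_⟩
    · intro α; simp [hy_zero α]
    · exact Measure.AbsolutelyContinuous.mk fun s _ _ => by simp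
    · ext s hs
      rw [withDensity_apply _ hs]
      simp
    · simp
  · -- main case: μ ≠ 0
    have hcont : ∀ p : MvPolynomial (Fin n) ℝ, Continuous fun x => eval x p :=
      fun p => MvPolynomial.continuous_eval p
    have hmem : ∀ (p : MvPolynomial (Fin n) ℝ) (q : ENNReal),
        MemLp (fun x => eval x p) q μ := fun p q => memLp_of_continuous hK μ hμK (hcont p) q
    have hLz : ∀ p : MvPolynomial (Fin n) ℝ, rieszFunctional z p = ∫ x, eval x p ∂μ :=
      riesz_moment_eq_integral hK μ hμK z hz
    have hy1 : rieszFunctional y 1 = rieszFunctional y (1 ^ 2) := by rw [one_pow]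
    set a : ℝ := rieszFunctional y 1 with hadef
    have ha0 : 0 ≤ a := hy1 ▸ (hy0 1).1
    have hμuniv : 0 < (μ Set.univ).toReal := by
      refine ENNReal.toReal_pos ?_ (measure_ne_top μ _)
      simpa [Measure.measure_univ_eq_zero] using hμ0
    have hLz1 : rieszFunctional z ((1 : MvPolynomial (Fin n) ℝ) ^ 2) = (μ Set.univ).toReal := by
      rw [hLz]
      simp
      rfl
    have hκ : 0 ≤ κ := by
      have h1 := (hy0 1).1
      have h2 := (hy0 1).2
      rw [hLz1] at h2
      nlinarith
    set Ly : MvPolynomial (Fin n) ℝ →ₗ[ℝ] ℝ := rieszLin y with hLydef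
    have hLy : ∀ p, rieszFunctional y p = Ly p := fun p => riesz_eq_lc y p
    -- Cauchy–Schwarz against the constant 1
    have hCS : ∀ f : MvPolynomial (Fin n) ℝ, (Ly f) ^ 2 ≤ a * rieszFunctional y (f ^ 2) := by
      intro f
      have hquad : ∀ t : ℝ,
          0 ≤ a * (t * t) + (2 * Ly f) * t + rieszFunctional y (f ^ 2) := by
        intro t
        have hexp : (f + C t) ^ 2 = f ^ 2 + (2 * t) • f + (t * t) • 1 := by
          rw [smul_eq_C_mul, smul_eq_C_mul, map_mul, map_mul]
          have h2 : (C (2:ℝ) : MvPolynomial (Fin n) ℝ) = 2 := map_ofNat _ 2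
          rw [h2]
          ring
        have h := (hy0 (f + C t)).1
        rw [hLy, hexp, map_add, map_add, _root_.map_smul, _root_.map_smul] at h
        have h1 : Ly (1 : MvPolynomial (Fin n) ℝ) = a := (hLy 1).symm
        rw [h1] at h
        rw [hLy]
        rw [smul_eq_mul, smul_eq_mul] at h
        linarith
      have hd := discrim_le_zero hquad
      rw [discrim] at hd
      nlinarith
    -- the linear map into L²
    set T : MvPolynomial (Fin n) ℝ →ₗ[ℝ] Lp ℝ 2 μ :=
      { toFun := fun p => MemLp.toLp _ (hmem p 2)
        map_add' := by
          intro p q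
          refine Lp.ext ?_
          filter_upwards [MemLp.coeFn_toLp (hmem (p + q) 2),
            Lp.coeFn_add (MemLp.toLp _ (hmem p 2)) (MemLp.toLp _ (hmem q 2)),
            MemLp.coeFn_toLp (hmem p 2), MemLp.coeFn_toLp (hmem q 2)] with x h1 h2 h3 h4
          rw [h1, h2]
          simp [h3, h4]
        map_smul' := by
          intro c p
          simp only [RingHom.id_apply]
          refine Lp.ext ?_
          filter_upwards [MemLp.coeFn_toLp (hmem (c • p) 2),
            Lp.coeFn_smul c (MemLp.toLp _ (hmem p 2)),
            MemLp.coeFn_toLp (hmem p 2)] with x h1 h2 h3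
          rw [h1, h2]
          simp [h3, smul_eq_C_mul] } with hTdef
    have hTapp : ∀ p, T p = MemLp.toLp _ (hmem p 2) := fun p => rfl
    have hinner : ∀ p q : MvPolynomial (Fin n) ℝ,
        (inner ℝ (T p) (T q) : ℝ) = ∫ x, eval x p * eval x q ∂μ := by
      intro p q
      rw [hTapp, hTapp, L2.inner_def]
      refine integral_congr_ae ?_
      filter_upwards [MemLp.coeFn_toLp (hmem p 2), MemLp.coeFn_toLp (hmem q 2)] with x h1 h2
      rw [h1, h2]
      simp [RCLike.inner_apply]
      exact mul_comm _ _
    have hnormsq : ∀ p : MvPolynomial (Fin n) ℝ,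
        rieszFunctional z (p ^ 2) = ‖T p‖ ^ 2 := by
      intro p
      rw [hLz, ← real_inner_self_eq_norm_sq, hinner]
      refine integral_congr_ae (ae_of_all _ fun x => ?_)
      simp [sq]
    set Cb : ℝ := Real.sqrt (a * κ) with hCbdef
    have hCb0 : 0 ≤ Cb := Real.sqrt_nonneg _
    have hbound : ∀ p : MvPolynomial (Fin n) ℝ, |Ly p| ≤ Cb * ‖T p‖ := by
      intro p
      have h1 := hCS p
      have h2 := (hy0 p).2
      rw [hnormsq p] at h2
      have h4 : (Ly p) ^ 2 ≤ a * κ * ‖T p‖ ^ 2 := by nlinarith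
      calc |Ly p| = Real.sqrt ((Ly p) ^ 2) := (Real.sqrt_sq_eq_abs _).symm
        _ ≤ Real.sqrt (a * κ * ‖T p‖ ^ 2) := Real.sqrt_le_sqrt h4
        _ = Cb * ‖T p‖ := by
            rw [Real.sqrt_mul (by positivity), Real.sqrt_sq (norm_nonneg _)]
    have hker : LinearMap.ker T ≤ LinearMap.ker Ly := by
      intro p hp
      rw [LinearMap.mem_ker] at hp ⊢
      have := hbound p
      rw [hp, norm_zero, mul_zero] at this
      exact abs_eq_zero.mp (le_antisymm this (abs_nonneg _))
    set S : Submodule ℝ (Lp ℝ 2 μ) := LinearMap.range T with hSdef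
    set e := T.quotKerEquivRange with hedef
    set φ : S →ₗ[ℝ] ℝ :=
      (Submodule.liftQ (LinearMap.ker T) Ly hker).comp (e.symm : S →ₗ[ℝ] _) with hφdef
    have hφ : ∀ p : MvPolynomial (Fin n) ℝ,
        φ ⟨T p, LinearMap.mem_range_self T p⟩ = Ly p := by
      intro p
      have he : e (Submodule.Quotient.mk p) = ⟨T p, LinearMap.mem_range_self T p⟩ :=
        Subtype.ext (by simp [hedef, LinearMap.quotKerEquivRange_apply_mk])
      have he2 : e.symm ⟨T p, LinearMap.mem_range_self T p⟩ = Submodule.Quotient.mk p := by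
        rw [LinearEquiv.symm_apply_eq, he]
      rw [hφdef]
      simp only [LinearMap.comp_apply, LinearEquiv.coe_coe, he2, Submodule.liftQ_apply]
    have hφb : ∀ x : S, ‖φ x‖ ≤ Cb * ‖x‖ := by
      rintro ⟨-, p, rfl⟩
      have h1 : φ ⟨T p, LinearMap.mem_range_self T p⟩ = Ly p := hφ p
      rw [h1, Real.norm_eq_abs]
      exact hbound p
    set φc : S →L[ℝ] ℝ := φ.mkContinuous Cb hφb with hφcdef
    obtain ⟨Φ, hΦ, -⟩ := exists_extension_norm_eq S φc
    set hL : Lp ℝ 2 μ := (InnerProductSpace.toDual ℝ (Lp ℝ 2 μ)).symm Φ with hLdef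
    have hhL : ∀ v : Lp ℝ 2 μ, (inner ℝ hL v : ℝ) = Φ v := fun v =>
      InnerProductSpace.toDual_symm_apply
    set h : (Fin n → ℝ) → ℝ := ⇑hL with hhdef
    have hmeas : Measurable h := (Lp.stronglyMeasurable hL).measurable
    have hh_int : Integrable h μ :=
      memLp_one_iff_integrable.mp ((Lp.memLp hL).mono_exponent (by norm_num))
    have hkey : ∀ p : MvPolynomial (Fin n) ℝ,
        ∫ x, eval x p * h x ∂μ = rieszFunctional y p := by
      intro p
      have h1 : Φ (T p) = Ly p := by
        have := hΦ ⟨T p, LinearMap.mem_range_self T p⟩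
        rw [this]
        show φc _ = _
        rw [hφcdef, LinearMap.mkContinuous_apply]
        exact hφ p
      have h2 : (inner ℝ hL (T p) : ℝ) = ∫ x, h x * eval x p ∂μ := by
        rw [hTapp, L2.inner_def]
        refine integral_congr_ae ?_
        filter_upwards [MemLp.coeFn_toLp (hmem p 2)] with x h3
        rw [h3]
        simp [RCLike.inner_apply]
        exact mul_comm _ _
      rw [hLy]
      rw [← h1, ← hhL, h2]
      refine integral_congr_ae (ae_of_all _ fun x => ?_)
      ring
    have hval2 : ∀ f : MvPolynomial (Fin n) ℝ,
        ∫ x, (eval x f) ^ 2 * h x ∂μ = rieszFunctional y (f ^ 2) := by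
      intro f
      rw [← hkey (f ^ 2)]
      refine integral_congr_ae (ae_of_all _ fun x => ?_)
      simp [map_pow]
    have ht1 : ∀ f : MvPolynomial (Fin n) ℝ, 0 ≤ ∫ x, (eval x f) ^ 2 * h x ∂μ := by
      intro f
      rw [hval2 f]
      exact (hy0 f).1
    have hh_nonneg : 0 ≤ᵐ[μ] h := ae_nonneg_of_poly_tests hK hμK (Lp.memLp hL) ht1
    have ht2 : ∀ f : MvPolynomial (Fin n) ℝ, 0 ≤ ∫ x, (eval x f) ^ 2 * (κ - h x) ∂μ := by
      intro f
      have hint1 : Integrable (fun x => (eval x f) ^ 2 * κ) μ :=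
        integrable_of_continuous hK μ hμK (((hcont f).pow 2).mul continuous_const)
      have hint2 : Integrable (fun x => (eval x f) ^ 2 * h x) μ :=
        cont_mul_integrable hK hμK hh_int ((hcont f).pow 2)
      have hsplit : ∫ x, (eval x f) ^ 2 * (κ - h x) ∂μ
          = (∫ x, (eval x f) ^ 2 * κ ∂μ) - ∫ x, (eval x f) ^ 2 * h x ∂μ := by
        rw [← integral_sub hint1 hint2]
        congr 1
        funext x
        ring
      have hval1 : ∫ x, (eval x f) ^ 2 * κ ∂μ = κ * rieszFunctional z (f ^ 2) := by
        rw [hLz, ← integral_const_mul]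
        refine integral_congr_ae (ae_of_all _ fun x => ?_)
        simp [map_pow]
        ring
      rw [hsplit, hval1, hval2]
      linarith [(hy0 f).2]
    have hκh : 0 ≤ᵐ[μ] fun x => κ - h x :=
      ae_nonneg_of_poly_tests hK hμK ((memLp_const κ).sub (Lp.memLp hL)) ht2
    set ν : Measure (Fin n → ℝ) := μ.withDensity fun x => ENNReal.ofReal (h x) with hνdef
    have hν_ac : ν ≪ μ := withDensity_absolutelyContinuous μ _
    refine ⟨ν, hν_ac hμK, ?_, hν_ac, h, hmeas, rfl, ?_⟩
    · intro α
      have hmono : Measurable fun x => Real.toNNReal (h x) := hmeas.real_toNNReal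
      have hwd : ∫ x, ∏ i, x i ^ α i ∂ν
          = ∫ x, Real.toNNReal (h x) • (∏ i, x i ^ α i) ∂μ := by
        rw [hνdef]
        exact integral_withDensity_eq_integral_smul hmono _
      rw [hwd]
      have hstep : ∫ x, Real.toNNReal (h x) • (∏ i, x i ^ α i) ∂μ
          = ∫ x, eval x (monomial α (1:ℝ)) * h x ∂μ := by
        refine integral_congr_ae ?_
        filter_upwards [hh_nonneg] with x hx
        rw [NNReal.smul_def, smul_eq_mul, Real.coe_toNNReal _ hx, eval_monomial, one_mul,
          Finsupp.prod_pow]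
        ring
      rw [hstep, hkey, riesz_monomial]
    · filter_upwards [hh_nonneg, hκh] with x h1 h2
      exact ⟨h1, by simpa using h2⟩
end
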